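/- arXiv:2410.04832 — 7 statements merged into one kernel-verified Lean document; each statement's English description precedes it below -/
import Mathlib

section
/- Let X be a Banach space, U a bounded nonempty subset of X, (V_m)_{m∈ℕ} a sequence of bounded nonempty subsets of X, A ⊆ U a countable subset, and B_m ⊆ V_m countable subsets for each m. Then there exists a countable set Ã with A ⊆ Ã ⊆ U and ρ̄_H(Ã, B_m) ≤ ρ̄_H(U, V_m) for all m ∈ ℕ. -/
/-- The one-sided Hausdorff distance `ρ̄_H(A,B) = sup_{b ∈ B} inf_{a ∈ A} ‖a - b‖`. -/
noncomputable def rhoBar {X : Type*} [NormedAddCommGroup X] (A B : Set X) : ℝ :=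
  ⨆ b : B, ⨅ a : A, ‖(a : X) - (b : X)‖

/-- for a bounded nonempty `U`, bounded nonempty sets `V m`, a countable
`A ⊆ U` and countable `B m ⊆ V m`, there is a countable `Ã` with `A ⊆ Ã ⊆ U` and
`ρ̄_H(Ã, B m) ≤ ρ̄_H(U, V m)` for all `m`. -/
theorem stmt4 {X : Type*} [NormedAddCommGroup X] [NormedSpace ℝ X] [CompleteSpace X]
    (U : Set X) (hU : U.Nonempty) (hUb : Bornology.IsBounded U)
    (V : ℕ → Set X) (hV : ∀ m, (V m).Nonempty) (hVb : ∀ m, Bornology.IsBounded (V m))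
    (A : Set X) (hAU : A ⊆ U) (hAc : A.Countable)
    (B : ℕ → Set X) (hBV : ∀ m, B m ⊆ V m) (hBc : ∀ m, (B m).Countable) :
    ∃ Atil : Set X, A ⊆ Atil ∧ Atil ⊆ U ∧ Atil.Countable ∧
      ∀ m : ℕ, rhoBar Atil (B m) ≤ rhoBar U (V m) := by
  classical
  obtain ⟨a₀, ha₀⟩ := hU
  have hne : Nonempty U := ⟨⟨a₀, ha₀⟩⟩
  -- choice of near-infimum points in U
  have hf : ∀ b : X, ∀ n : ℕ, ∃ a : U, ‖(a : X) - b‖ < (⨅ a : U, ‖(a : X) - b‖) + 1/(n+1) := by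
    intro b n
    have hpos : (0:ℝ) < 1/(n+1) := by positivity
    have : (⨅ a : U, ‖(a : X) - b‖) < (⨅ a : U, ‖(a : X) - b‖) + 1/(n+1) := by linarith
    exact exists_lt_of_ciInf_lt this
  choose f hfU using hf
  set Bs : Set X := ⋃ m, B m with hBs
  set Atil : Set X :=
    insert a₀ (A ∪ ⋃ b ∈ Bs, Set.range (fun n : ℕ => (f b n : X))) with hAtil
  have hAsub : A ⊆ Atil := fun x hx => Set.mem_insert_iff.mpr (Or.inr (Or.inl hx))
  have hsubU : Atil ⊆ U := by
    intro x hx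
    rcases hx with rfl | hx
    · exact ha₀
    rcases hx with hx | hx
    · exact hAU hx
    · simp only [Set.mem_iUnion, Set.mem_range] at hx
      obtain ⟨b, _, n, rfl⟩ := hx
      exact (f b n).2
  have hcount : Atil.Countable := by
    refine (Set.Countable.union hAc ?_).insert a₀
    exact Set.Countable.biUnion (Set.countable_iUnion hBc) (fun b _ => Set.countable_range _)
  refine ⟨Atil, hAsub, hsubU, hcount, ?_⟩
  intro m
  -- bounds
  obtain ⟨C, hC⟩ := isBounded_iff_forall_norm_le.mp (hVb m)
  obtain ⟨b₀, hb₀⟩ := hV m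
  have hBddInf : ∀ (S : Set X) (b : X), BddBelow (Set.range fun a : S => ‖(a : X) - b‖) := by
    intro S b
    exact ⟨0, by rintro x ⟨a, rfl⟩; exact norm_nonneg _⟩
  have hBddSup : BddAbove (Set.range fun b : V m => ⨅ a : U, ‖(a : X) - (b : X)‖) := by
    refine ⟨‖a₀ - b₀‖ + (C + C), ?_⟩
    rintro x ⟨b, rfl⟩
    have h1 : (⨅ a : U, ‖(a : X) - (b : X)‖) ≤ ‖a₀ - (b : X)‖ :=
      ciInf_le (hBddInf U b) ⟨a₀, ha₀⟩
    have h2 : ‖a₀ - (b : X)‖ ≤ ‖a₀ - b₀‖ + ‖b₀ - (b : X)‖ := norm_sub_le_norm_sub_add_norm_sub _ _ _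
    have h3 : ‖b₀ - (b : X)‖ ≤ ‖b₀‖ + ‖(b : X)‖ := norm_sub_le _ _
    have h4 : ‖b₀‖ ≤ C := hC b₀ hb₀
    have h5 : ‖(b : X)‖ ≤ C := hC b b.2
    linarith
  have hinfle : ∀ b : X, b ∈ V m → (⨅ a : U, ‖(a : X) - b‖) ≤ rhoBar U (V m) := by
    intro b hb
    exact le_ciSup hBddSup ⟨b, hb⟩
  have hR0 : 0 ≤ rhoBar U (V m) := by
    refine le_trans ?_ (hinfle b₀ hb₀)
    exact Real.iInf_nonneg (fun a => norm_nonneg _)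
  -- main estimate
  refine Real.iSup_le (fun b => ?_) hR0
  have hbBs : (b : X) ∈ Bs := Set.mem_iUnion.mpr ⟨m, b.2⟩
  have hmem : ∀ n : ℕ, (f (b : X) n : X) ∈ Atil := by
    intro n
    refine Set.mem_insert_iff.mpr (Or.inr (Or.inr ?_))
    exact Set.mem_biUnion hbBs ⟨n, rfl⟩
  have key : (⨅ a : Atil, ‖(a : X) - (b : X)‖) ≤ ⨅ a : U, ‖(a : X) - (b : X)‖ := by
    refine le_of_forall_pos_le_add (fun ε hε => ?_)
    obtain ⟨n, hn⟩ := exists_nat_one_div_lt hε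
    have h1 : (⨅ a : Atil, ‖(a : X) - (b : X)‖) ≤ ‖(f (b : X) n : X) - (b : X)‖ :=
      ciInf_le (hBddInf Atil b) ⟨_, hmem n⟩
    have h2 := hfU (b : X) n
    linarith
  exact key.trans (hinfle b (hBV m b.2))
end

section
/- Let X be a Banach space and (U_n)_{n∈ℕ} a countable family of bounded nonempty subsets of X, with countable subsets A_n ⊆ U_n. Then there exist countable sets Ã_n with A_n ⊆ Ã_n ⊆ U_n such that for all n, m ∈ ℕ, the Hausdorff distance satisfies ρ_H(Ã_n, Ã_m) ≤ ρ_H(U_n, U_m). -/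
/-- The Hausdorff distance between bounded nonempty sets. -/
noncomputable def rhoH {X : Type*} [NormedAddCommGroup X] (A B : Set X) : ℝ :=
  max (rhoBar A B) (rhoBar B A)

lemma rhoBar_eq_infDist {X : Type*} [NormedAddCommGroup X] (A B : Set X) :
    rhoBar A B = ⨆ b : B, Metric.infDist (b : X) A := by
  unfold rhoBar
  refine iSup_congr fun b => ?_
  rw [Metric.infDist_eq_iInf]
  refine iInf_congr fun a => ?_
  rw [dist_eq_norm, norm_sub_rev]

/-- for a countable family of bounded nonempty sets `U n` with countable
subsets `A n ⊆ U n`, there are countable sets `Ã n` with `A n ⊆ Ã n ⊆ U n` and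
`ρ_H(Ã n, Ã m) ≤ ρ_H(U n, U m)` for all `n, m`. -/
theorem stmt5 {X : Type*} [NormedAddCommGroup X] [NormedSpace ℝ X] [CompleteSpace X]
    (U : ℕ → Set X) (hU : ∀ n, (U n).Nonempty) (hUb : ∀ n, Bornology.IsBounded (U n))
    (A : ℕ → Set X) (hAU : ∀ n, A n ⊆ U n) (hAc : ∀ n, (A n).Countable) :
    ∃ Atil : ℕ → Set X, (∀ n, A n ⊆ Atil n) ∧ (∀ n, Atil n ⊆ U n) ∧
      (∀ n, (Atil n).Countable) ∧
      ∀ n m : ℕ, rhoH (Atil n) (Atil m) ≤ rhoH (U n) (U m) := by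
  classical
  -- near-optimal approximation points
  have hex : ∀ (b : X) (n j : ℕ), ∃ a ∈ U n,
      dist b a < Metric.infDist b (U n) + 1 / (j + 1) := by
    intro b n j
    have hj : (0:ℝ) < 1 / (j + 1) := by positivity
    exact (Metric.infDist_lt_iff (hU n)).mp (by linarith)
  choose f hfU hfd using hex
  -- iterative construction
  let B : ℕ → ℕ → Set X := fun k => Nat.rec
    (fun n => insert ((hU n).some) (A n))
    (fun _ Bk n => Bk n ∪ ⋃ m, ⋃ j, (fun b => f b n j) '' Bk m) k
  have hB0 : ∀ n, B 0 n = insert ((hU n).some) (A n) := fun n => rfl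
  have hBS : ∀ k n, B (k+1) n = B k n ∪ ⋃ m, ⋃ j, (fun b => f b n j) '' B k m :=
    fun k n => rfl
  have hBsub : ∀ k n, B k n ⊆ U n := by
    intro k
    induction k with
    | zero =>
      intro n x hx
      rcases hx with rfl | hx
      · exact (hU n).some_mem
      · exact hAU n hx
    | succ k ih =>
      intro n x hx
      rw [hBS] at hx
      rcases hx with hx | hx
      · exact ih n hx
      · simp only [Set.mem_iUnion, Set.mem_image] at hx
        obtain ⟨m, j, b, _, rfl⟩ := hx
        exact hfU b n j
  have hBcnt : ∀ k n, (B k n).Countable := by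
    intro k
    induction k with
    | zero => exact fun n => ((hAc n).insert _)
    | succ k ih =>
      intro n
      rw [hBS]
      exact (ih n).union <| Set.countable_iUnion fun m =>
        Set.countable_iUnion fun j => (ih m).image _
  have hBmono : ∀ k n, B k n ⊆ B (k+1) n := by
    intro k n
    rw [hBS]; exact Set.subset_union_left
  refine ⟨fun n => ⋃ k, B k n, ?_, ?_, ?_, ?_⟩
  · intro n x hx
    exact Set.mem_iUnion.mpr ⟨0, Set.mem_insert_iff.mpr (Or.inr hx)⟩
  · intro n x hx
    obtain ⟨k, hk⟩ := Set.mem_iUnion.mp hx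
    exact hBsub k n hk
  · exact fun n => Set.countable_iUnion fun k => hBcnt k n
  · -- the Hausdorff distance bound
    set Atil : ℕ → Set X := fun n => ⋃ k, B k n with hAtil
    have hAtilU : ∀ n, Atil n ⊆ U n := by
      intro n x hx
      obtain ⟨k, hk⟩ := Set.mem_iUnion.mp hx
      exact hBsub k n hk
    have hne : ∀ n, (Atil n).Nonempty :=
      fun n => ⟨(hU n).some, Set.mem_iUnion.mpr ⟨0, Set.mem_insert _ _⟩⟩
    -- closure property: near-optimal points are inside Atil
    have hclose : ∀ n m, ∀ b ∈ Atil m, ∀ j : ℕ, f b n j ∈ Atil n := by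
      intro n m b hb j
      obtain ⟨k, hk⟩ := Set.mem_iUnion.mp hb
      refine Set.mem_iUnion.mpr ⟨k + 1, ?_⟩
      rw [hBS]
      exact Or.inr (Set.mem_iUnion.mpr ⟨m, Set.mem_iUnion.mpr ⟨j, ⟨b, hk, rfl⟩⟩⟩)
    have hinf : ∀ n m, ∀ b ∈ Atil m,
        Metric.infDist b (Atil n) ≤ Metric.infDist b (U n) := by
      intro n m b hb
      refine le_of_forall_pos_le_add fun ε hε => ?_
      obtain ⟨j, hj⟩ := exists_nat_one_div_lt hε
      have h1 : Metric.infDist b (Atil n) ≤ dist b (f b n j) :=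
        Metric.infDist_le_dist_of_mem (hclose n m b hb j)
      have h2 := hfd b n j
      linarith
    -- one-sided bound
    have key : ∀ n m, rhoBar (Atil n) (Atil m) ≤ rhoBar (U n) (U m) := by
      intro n m
      rw [rhoBar_eq_infDist, rhoBar_eq_infDist]
      obtain ⟨C, hC⟩ := Metric.isBounded_iff.mp ((hUb n).union (hUb m))
      have hbdd : ∀ b ∈ U m, Metric.infDist b (U n) ≤ C := by
        intro b hb
        refine le_trans (Metric.infDist_le_dist_of_mem (hU n).some_mem) ?_
        exact hC (Or.inr hb) (Or.inl (hU n).some_mem)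
      have hBdd : BddAbove (Set.range fun b : U m => Metric.infDist (b : X) (U n)) := by
        refine ⟨C, ?_⟩
        rintro x ⟨b, rfl⟩
        exact hbdd b b.2
      haveI : Nonempty (Atil m) := (hne m).to_subtype
      refine ciSup_le fun b => ?_
      have hbU : (b : X) ∈ U m := hAtilU m b.2
      calc Metric.infDist (b : X) (Atil n) ≤ Metric.infDist (b : X) (U n) :=
            hinf n m b b.2
        _ ≤ ⨆ b' : U m, Metric.infDist (b' : X) (U n) :=
            le_ciSup_of_le hBdd ⟨(b : X), hbU⟩ le_rfl
    intro n m
    exact max_le_max (key n m) (key m n)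
end

section
/- For every n ∈ ℕ and every Banach space X with dim X ≥ 2^n, there exist finite-dimensional compact convex subsets V_1, ..., V_n of the unit ball of X such that for every collection of reals a_1, ..., a_n, ‖∑_{k=1}^n a_k R(V_k)‖ ≥ (1/2)∑_{k=1}^n |a_k|, where R is the Rådström (support function) embedding and the norm is the sup norm over the dual unit sphere. -/
/-- The support function `R(A)(x*) = sup_{a ∈ A} x*(a)`. -/
noncomputable def suppFn {X : Type*} [NormedAddCommGroup X] [NormedSpace ℝ X]
    (A : Set X) (f : X →L[ℝ] ℝ) : ℝ :=
  ⨆ a : A, f a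

open Function

set_option synthInstance.maxHeartbeats 1000000 in
set_option maxHeartbeats 1000000 in
theorem exists_auerbach {X : Type*} [NormedAddCommGroup X] [NormedSpace ℝ X]
    {ι : Type*} [Fintype ι] [DecidableEq ι] (v : ι → X)
    (hv : LinearIndependent ℝ v) :
    ∃ (e : ι → X) (f : ι → X →L[ℝ] ℝ), (∀ i, ‖e i‖ ≤ 1) ∧ (∀ i, ‖f i‖ = 1) ∧
      (∀ i j, f i (e j) = if i = j then 1 else 0) := by
  classical
  set Y : Submodule ℝ X := Submodule.span ℝ (Set.range v) with hY
  haveI : FiniteDimensional ℝ Y := FiniteDimensional.span_of_finite ℝ (Set.finite_range v)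
  let b : Module.Basis ι ℝ Y := Module.Basis.span hv
  -- continuity of the determinant
  have cont : Continuous fun u : ι → Y => b.det u := by
    have h0 : ∀ u : ι → Y, b.det u = Matrix.det (b.toMatrix u) := fun u => b.det_apply u
    simp_rw [h0]
    refine Continuous.matrix_det (continuous_matrix fun i j => ?_)
    have h1 : Continuous fun y : Y => b.coord i y :=
      LinearMap.continuous_of_finiteDimensional (b.coord i)
    have h2 : Continuous fun u : ι → Y => u j := continuous_apply j
    exact h1.comp h2
  -- the compact set of unit-ball-valued tuples
  set K : Set (ι → Y) := Set.univ.pi fun _ => Metric.closedBall (0 : Y) 1 with hK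
  have hKc : IsCompact K := isCompact_univ_pi fun _ => isCompact_closedBall _ _
  have memK : ∀ {u : ι → Y}, (∀ i, ‖u i‖ ≤ 1) → u ∈ K := by
    intro u hu
    intro i _
    simpa using hu i
  have normK : ∀ {u : ι → Y}, u ∈ K → ∀ i, ‖u i‖ ≤ 1 := by
    intro u hu i
    simpa using hu i (Set.mem_univ i)
  -- a tuple with nonzero determinant
  have hbne : ∀ i, b i ≠ 0 := fun i => b.ne_zero i
  set u₀ : ι → Y := fun i => ‖(b i : Y)‖⁻¹ • b i with hu₀
  have hu₀K : u₀ ∈ K := by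
    refine memK fun i => ?_
    rw [norm_smul, norm_inv, norm_norm]
    rw [inv_mul_cancel₀ (norm_ne_zero_iff.mpr (hbne i))]
  have hu₀det : b.det u₀ ≠ 0 := by
    have := (b.det.toMultilinearMap).map_smul_univ (fun i => ‖(b i : Y)‖⁻¹) b
    simp only [AlternatingMap.coe_multilinearMap] at this
    rw [hu₀, this, b.det_self, smul_eq_mul, mul_one]
    exact Finset.prod_ne_zero_iff.mpr fun i _ =>
      inv_ne_zero (norm_ne_zero_iff.mpr (hbne i))
  -- maximize |det| on K
  obtain ⟨e, heK, hemax⟩ := hKc.exists_isMaxOn ⟨u₀, hu₀K⟩ cont.abs.continuousOn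
  have hM : (0:ℝ) < |b.det e| := lt_of_lt_of_le (abs_pos.mpr hu₀det) (hemax hu₀K)
  set M₀ : ℝ := b.det e with hM₀
  have hM₀ne : M₀ ≠ 0 := abs_pos.mp hM
  -- the biorthogonal functionals on Y
  set g : ι → Y →ₗ[ℝ] ℝ := fun i => M₀⁻¹ • (b.det.toMultilinearMap.toLinearMap e i) with hg
  have hgapp : ∀ i y, g i y = M₀⁻¹ * b.det (Function.update e i y) := by
    intro i y; simp [hg, MultilinearMap.toLinearMap_apply]
  have hg_bound : ∀ i (y : Y), |g i y| ≤ ‖y‖ := by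
    intro i y
    rcases eq_or_ne y 0 with rfl | hy
    · simp
    · have hyn : ‖y‖ ≠ 0 := norm_ne_zero_iff.mpr hy
      set y' : Y := ‖y‖⁻¹ • y with hy'
      have hy'1 : ‖y'‖ ≤ 1 := by
        rw [hy', norm_smul, norm_inv, norm_norm, inv_mul_cancel₀ hyn]
      have hupd : Function.update e i y' ∈ K := by
        refine memK fun j => ?_
        rcases eq_or_ne j i with rfl | hj
        · simpa using hy'1
        · rw [Function.update_of_ne hj]; exact normK heK j
      have hdet' : |b.det (Function.update e i y')| ≤ |M₀| := hemax hupd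
      have hdec : y = ‖y‖ • y' := by
        rw [hy', smul_smul, mul_inv_cancel₀ hyn, one_smul]
      have : b.det (Function.update e i y) = ‖y‖ * b.det (Function.update e i y') := by
        conv_lhs => rw [hdec]
        rw [b.det.map_update_smul]
        simp
      rw [hgapp, this, abs_mul, abs_mul, abs_inv]
      rw [abs_of_nonneg (norm_nonneg y)]
      calc |M₀|⁻¹ * (‖y‖ * |b.det (Function.update e i y')|)
          ≤ |M₀|⁻¹ * (‖y‖ * |M₀|) := by
            apply mul_le_mul_of_nonneg_left _ (inv_nonneg.mpr (abs_nonneg _))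
            exact mul_le_mul_of_nonneg_left hdet' (norm_nonneg y)
        _ = ‖y‖ := by field_simp
  have hg_diag : ∀ i j, g i (e j) = if i = j then 1 else 0 := by
    intro i j
    rcases eq_or_ne i j with rfl | hij
    · rw [hgapp, Function.update_eq_self, if_pos rfl, ← hM₀, inv_mul_cancel₀ hM₀ne]
    · rw [hgapp, if_neg hij]
      have : b.det (Function.update e i (e j)) = 0 := by
        refine b.det.map_eq_zero_of_eq _ (i := i) (j := j) ?_ hij
        rw [Function.update_self, Function.update_of_ne (Ne.symm hij)]
      rw [this, mul_zero]
  -- continuous versions, with norm one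
  set gc : ι → Y →L[ℝ] ℝ := fun i => LinearMap.toContinuousLinearMap (g i) with hgc
  have hgc_norm : ∀ i, ‖gc i‖ = 1 := by
    intro i
    refine le_antisymm (ContinuousLinearMap.opNorm_le_bound _ zero_le_one fun y => ?_) ?_
    · rw [one_mul]; simpa [hgc] using hg_bound i y
    · have h1 : gc i (e i) = 1 := by
        have := hg_diag i i; simp only [if_pos rfl] at this
        simpa [hgc] using this
      have := (gc i).le_opNorm (e i)
      rw [h1] at this
      simp only [norm_one] at this
      calc (1:ℝ) ≤ ‖gc i‖ * ‖e i‖ := this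
        _ ≤ ‖gc i‖ * 1 := by
            exact mul_le_mul_of_nonneg_left (normK heK i) (ContinuousLinearMap.opNorm_nonneg _)
        _ = ‖gc i‖ := mul_one _
  -- extend to X
  have hext : ∀ i, ∃ F : X →L[ℝ] ℝ, (∀ y : Y, F y = gc i y) ∧ ‖F‖ = ‖gc i‖ :=
    fun i => exists_extension_norm_eq Y (gc i)
  choose F hF hFn using hext
  refine ⟨fun i => (e i : X), F, fun i => normK heK i, fun i => by rw [hFn, hgc_norm], ?_⟩
  intro i j
  rw [hF i (e j)]
  have := hg_diag i j
  simpa [hgc] using this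


/-- if `dim X ≥ 2^n` there are finite-dimensional compact convex subsets
`V 1, ..., V n` of the unit ball such that for all reals `a k`,
`‖∑ a k R(V k)‖ ≥ (1/2) ∑ |a k|`, the norm being the sup norm over the dual unit sphere. -/
theorem stmt9 {X : Type*} [NormedAddCommGroup X] [NormedSpace ℝ X] [CompleteSpace X]
    (n : ℕ) (hdim : ((2 ^ n : ℕ) : Cardinal) ≤ Module.rank ℝ X) :
    ∃ V : Fin n → Set X,
      (∀ k, V k ⊆ Metric.closedBall (0 : X) 1) ∧
      (∀ k, IsCompact (V k)) ∧ (∀ k, Convex ℝ (V k)) ∧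
      (∀ k, FiniteDimensional ℝ (Submodule.span ℝ (V k))) ∧
      ∀ a : Fin n → ℝ,
        (1 / 2) * ∑ k, |a k| ≤
          ⨆ f : {f : X →L[ℝ] ℝ // ‖f‖ = 1}, |∑ k, a k * suppFn (V k) f.1| := by
  classical
  obtain ⟨w, hw⟩ := exists_linearIndependent_of_le_rank (R := ℝ) (M := X) hdim
  set E : Finset (Fin n) ≃ Fin (2 ^ n) :=
    Fintype.equivFinOfCardEq (by simp) with hE
  have hv : LinearIndependent ℝ (w ∘ E) := hw.comp E E.injective
  obtain ⟨e, f, he, hf, hef⟩ := exists_auerbach (w ∘ E) hv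
  set s : Fin n → Set X := fun k => e '' {T : Finset (Fin n) | k ∈ T} with hs
  set Vs : Fin n → Set X := fun k => convexHull ℝ (s k) with hVs
  -- basic membership facts
  have hmem : ∀ k (T : Finset (Fin n)), k ∈ T → e T ∈ Vs k := fun k T hT =>
    subset_convexHull ℝ _ ⟨T, hT, rfl⟩
  have hmemk : ∀ k, e {k} ∈ Vs k := fun k => hmem k {k} (Finset.mem_singleton_self k)
  haveI hne : ∀ k, Nonempty ↥(Vs k) := fun k => ⟨⟨_, hmemk k⟩⟩
  -- V k is in the unit ball
  have hball : ∀ k, Vs k ⊆ Metric.closedBall (0 : X) 1 := by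
    intro k
    refine convexHull_min ?_ (convex_closedBall 0 1)
    rintro x ⟨T, hT, rfl⟩
    exact mem_closedBall_zero_iff.mpr (he T)
  have hnorm : ∀ k x, x ∈ Vs k → ‖x‖ ≤ 1 := fun k x hx =>
    mem_closedBall_zero_iff.mp (hball k hx)
  -- upper bounds for linear functionals on the convex hull
  have hhull : ∀ (k : Fin n) (φ : X →L[ℝ] ℝ) (c : ℝ),
      (∀ T : Finset (Fin n), k ∈ T → φ (e T) ≤ c) → ∀ x ∈ Vs k, φ x ≤ c := by
    intro k φ c hφ x hx
    have hsub : Vs k ⊆ {x | φ x ≤ c} := by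
      refine convexHull_min ?_ (convex_halfSpace_le ⟨φ.map_add, φ.map_smul⟩ c)
      rintro y ⟨T, hT, rfl⟩
      exact hφ T hT
    exact hsub hx
  -- the key computation of the support function at f T
  have hsupp : ∀ (T : Finset (Fin n)) (k : Fin n),
      suppFn (Vs k) (f T) = if k ∈ T then 1 else 0 := by
    intro T k
    have hub : ∀ x ∈ Vs k, f T x ≤ (if k ∈ T then (1:ℝ) else 0) := by
      refine hhull k (f T) _ ?_
      intro S hS
      rw [hef T S]
      by_cases hkT : k ∈ T
      · simp only [if_pos hkT]
        split <;> norm_num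
      · have hTS : T ≠ S := fun h => hkT (h ▸ hS)
        simp [hTS, hkT]
    have hbdd : BddAbove (Set.range fun x : ↥(Vs k) => f T x) := by
      refine ⟨if k ∈ T then (1:ℝ) else 0, ?_⟩
      rintro y ⟨x, rfl⟩
      exact hub x x.2
    unfold suppFn
    refine le_antisymm (ciSup_le fun x => hub x x.2) ?_
    by_cases hkT : k ∈ T
    · rw [if_pos hkT]
      have := le_ciSup hbdd (⟨e T, hmem k T hkT⟩ : ↥(Vs k))
      simpa [hef T T] using this
    · rw [if_neg hkT]
      have hTk : T ≠ ({k} : Finset (Fin n)) := fun h => hkT (h ▸ Finset.mem_singleton_self k)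
      have := le_ciSup hbdd (⟨e {k}, hmemk k⟩ : ↥(Vs k))
      simpa [hef T {k}, hTk] using this
  -- support functions are bounded by 1 in absolute value for unit functionals
  have hsuppbd : ∀ (k : Fin n) (φ : {f : X →L[ℝ] ℝ // ‖f‖ = 1}), |suppFn (Vs k) φ.1| ≤ 1 := by
    intro k φ
    have hub : ∀ x ∈ Vs k, φ.1 x ≤ 1 := by
      intro x hx
      calc φ.1 x ≤ |φ.1 x| := le_abs_self _
        _ ≤ ‖φ.1‖ * ‖x‖ := φ.1.le_opNorm x
        _ ≤ 1 := by rw [φ.2, one_mul]; exact hnorm k x hx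
    have hbdd : BddAbove (Set.range fun x : ↥(Vs k) => φ.1 x) :=
      ⟨1, by rintro y ⟨x, rfl⟩; exact hub x x.2⟩
    have hge : -1 ≤ suppFn (Vs k) φ.1 := by
      have h1 : -1 ≤ φ.1 (e {k}) := by
        have := φ.1.le_opNorm (e ({k} : Finset (Fin n)))
        rw [φ.2, one_mul] at this
        have h2 : ‖e ({k} : Finset (Fin n))‖ ≤ 1 := he _
        have := abs_le.mp (le_trans this h2)
        linarith [(abs_le.mp (le_trans (φ.1.le_opNorm (e ({k} : Finset (Fin n)))) (by rw [φ.2, one_mul]; exact he _) : |φ.1 (e ({k} : Finset (Fin n)))| ≤ 1)).1]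
      exact le_trans h1 (le_ciSup hbdd (⟨e {k}, hmemk k⟩ : ↥(Vs k)))
    have hle : suppFn (Vs k) φ.1 ≤ 1 := ciSup_le fun x => hub x x.2
    exact abs_le.mpr ⟨hge, hle⟩
  refine ⟨Vs, hball, fun k => ((Set.toFinite _).image e).isCompact_convexHull (𝕜 := ℝ),
    fun k => convex_convexHull ℝ _, ?_, ?_⟩
  · intro k
    have h1 : Submodule.span ℝ (Vs k) = Submodule.span ℝ (s k) := by
      refine le_antisymm ?_ (Submodule.span_mono (subset_convexHull ℝ _))
      rw [Submodule.span_le]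
      exact convexHull_min Submodule.subset_span (Submodule.span ℝ (s k)).convex
    rw [h1]
    exact FiniteDimensional.span_of_finite ℝ ((Set.toFinite _).image e)
  · intro a
    have hsum : ∀ T : Finset (Fin n),
        ∑ k, a k * suppFn (Vs k) (f T) = ∑ k ∈ T, a k := by
      intro T
      rw [Finset.sum_congr rfl fun k _ => by rw [hsupp T k]]
      simp [mul_ite, Finset.sum_ite_mem]
    have houter : ∀ φ : {f : X →L[ℝ] ℝ // ‖f‖ = 1},
        |∑ k, a k * suppFn (Vs k) φ.1| ≤ ∑ k, |a k| := by
      intro φ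
      calc |∑ k, a k * suppFn (Vs k) φ.1| ≤ ∑ k, |a k * suppFn (Vs k) φ.1| :=
            Finset.abs_sum_le_sum_abs _ _
        _ ≤ ∑ k, |a k| := by
            refine Finset.sum_le_sum fun k _ => ?_
            rw [abs_mul]
            exact mul_le_of_le_one_right (abs_nonneg _) (hsuppbd k φ)
    have hbddouter : BddAbove (Set.range fun φ : {f : X →L[ℝ] ℝ // ‖f‖ = 1} =>
        |∑ k, a k * suppFn (Vs k) φ.1|) :=
      ⟨∑ k, |a k|, by rintro y ⟨φ, rfl⟩; exact houter φ⟩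
    set Tp : Finset (Fin n) := Finset.univ.filter fun k => 0 ≤ a k with hTpd
    set Tm : Finset (Fin n) := Finset.univ.filter fun k => ¬ 0 ≤ a k with hTm
    have h1 : ∑ k ∈ Tp, a k ≤
        ⨆ φ : {f : X →L[ℝ] ℝ // ‖f‖ = 1}, |∑ k, a k * suppFn (Vs k) φ.1| := by
      have := le_ciSup hbddouter (⟨f Tp, hf Tp⟩ : {f : X →L[ℝ] ℝ // ‖f‖ = 1})
      rw [hsum Tp] at this
      exact le_trans (le_abs_self _) this
    have h2 : -(∑ k ∈ Tm, a k) ≤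
        ⨆ φ : {f : X →L[ℝ] ℝ // ‖f‖ = 1}, |∑ k, a k * suppFn (Vs k) φ.1| := by
      have := le_ciSup hbddouter (⟨f Tm, hf Tm⟩ : {f : X →L[ℝ] ℝ // ‖f‖ = 1})
      rw [hsum Tm] at this
      exact le_trans (neg_le_abs _) this
    have h3 : ∑ k, |a k| = (∑ k ∈ Tp, a k) + -(∑ k ∈ Tm, a k) := by
      rw [← Finset.sum_filter_add_sum_filter_not Finset.univ (fun k => 0 ≤ a k) (fun k => |a k|)]
      rw [Finset.sum_congr rfl fun k hk => abs_of_nonneg (Finset.mem_filter.mp hk).2]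
      rw [Finset.sum_congr rfl fun k hk =>
        abs_of_neg (lt_of_not_ge (Finset.mem_filter.mp hk).2)]
      rw [Finset.sum_neg_distrib]
    rw [h3]
    linarith
end

section
/- For every n ∈ ℕ and every Banach space X with dim X ≥ 2^n, there exist finite-dimensional compact convex subsets V_1, ..., V_n of the unit ball of X such that for every choice of signs θ_k = ±1, ‖∑_{k=1}^n θ_k R(V_k)‖ ≥ n/2, where R is the support function embedding with sup norm over the dual unit sphere. -/
open Function Metric

lemma auerbach {E : Type*} [NormedAddCommGroup E] [NormedSpace ℝ E] [FiniteDimensional ℝ E]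
    {ι : Type*} [Fintype ι] [DecidableEq ι] (B : Module.Basis ι ℝ E) :
    ∃ (e : ι → E) (f : ι → (E →L[ℝ] ℝ)), (∀ i, ‖e i‖ ≤ 1) ∧ (∀ i, ‖f i‖ ≤ 1) ∧
      (∀ i, f i (e i) = 1) ∧ (∀ i j, i ≠ j → f i (e j) = 0) := by
  classical
  set g : (ι → E) → ℝ := fun v => |B.det v| with hg
  have hcont : Continuous g := by
    have h1 : Continuous fun v : ι → E => B.toMatrix v := by
      apply continuous_matrix
      intro i j
      simp only [Module.Basis.toMatrix_apply]
      exact ((B.coord i).continuous_of_finiteDimensional).comp (continuous_apply j)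
    simpa only [hg, Module.Basis.det_apply] using h1.matrix_det.abs
  have hK : IsCompact (closedBall (0 : ι → E) 1) := isCompact_closedBall _ _
  obtain ⟨e, heK, hmax⟩ := hK.exists_isMaxOn ⟨0, mem_closedBall_self zero_le_one⟩
    hcont.continuousOn
  have hball : ∀ v : ι → E, (∀ i, ‖v i‖ ≤ 1) → v ∈ closedBall (0 : ι → E) 1 := by
    intro v hv
    rw [mem_closedBall, dist_zero_right]
    exact pi_norm_le_iff_of_nonneg zero_le_one |>.2 hv
  have he1 : ∀ i, ‖e i‖ ≤ 1 := by
    intro i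
    rw [mem_closedBall, dist_zero_right] at heK
    exact (norm_le_pi_norm e i).trans heK
  -- positivity of the max
  have hpos : 0 < g e := by
    have hv0 : (fun i => ‖B i‖⁻¹ • B i) ∈ closedBall (0 : ι → E) 1 := by
      apply hball
      intro i
      rw [norm_smul, norm_inv, norm_norm, inv_mul_cancel₀ (norm_ne_zero_iff.2 (B.ne_zero i))]
    have : g (fun i => ‖B i‖⁻¹ • B i) > 0 := by
      have : B.det (fun i => ‖B i‖⁻¹ • B i) = (∏ i, ‖B i‖⁻¹) • B.det B := by
        simpa using (B.det).toMultilinearMap.map_smul_univ (fun i => ‖B i‖⁻¹) ⇑B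
      rw [hg]
      simp only [this, Module.Basis.det_self, smul_eq_mul, mul_one]
      rw [abs_of_pos (Finset.prod_pos fun i _ => inv_pos.2 (norm_pos_iff.2 (B.ne_zero i)))]
      exact Finset.prod_pos fun i _ => inv_pos.2 (norm_pos_iff.2 (B.ne_zero i))
    exact lt_of_lt_of_le this (hmax hv0)
  set d : ℝ := B.det e with hd
  have hdne : d ≠ 0 := by
    intro h
    rw [hg] at hpos
    simp [← hd, h] at hpos
  set φ : ι → (E →ₗ[ℝ] ℝ) := fun i => d⁻¹ • ((B.det).toMultilinearMap.toLinearMap e i) with hφ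
  have hφ_apply : ∀ i x, φ i x = d⁻¹ * B.det (update e i x) := by
    intro i x; rfl
  have hφ_bound : ∀ i x, ‖x‖ ≤ 1 → |φ i x| ≤ 1 := by
    intro i x hx
    have hmem : update e i x ∈ closedBall (0 : ι → E) 1 := by
      apply hball
      intro j
      rcases eq_or_ne j i with rfl | hj
      · simpa using hx
      · simpa [update_apply, hj] using he1 j
    have := hmax hmem
    rw [hg] at this
    rw [hφ_apply, abs_mul, abs_inv]
    calc |d|⁻¹ * |B.det (update e i x)| ≤ |d|⁻¹ * |B.det e| := by
          apply mul_le_mul_of_nonneg_left this (by positivity)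
      _ = 1 := inv_mul_cancel₀ (by simpa [hg] using ne_of_gt hpos)
  refine ⟨e, fun i => LinearMap.toContinuousLinearMap (φ i), he1, ?_, ?_, ?_⟩
  · intro i
    apply ContinuousLinearMap.opNorm_le_bound _ zero_le_one
    intro x
    rcases eq_or_ne x 0 with rfl | hx
    · simp
    · have hxn : ‖x‖ ≠ 0 := norm_ne_zero_iff.2 hx
      have := hφ_bound i (‖x‖⁻¹ • x) (by rw [norm_smul, norm_inv, norm_norm, inv_mul_cancel₀ hxn])
      rw [map_smul, smul_eq_mul, abs_mul, abs_inv, abs_norm] at this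
      calc ‖LinearMap.toContinuousLinearMap (φ i) x‖ = |φ i x| := rfl
        _ = ‖x‖ * (‖x‖⁻¹ * |(φ i) x|) := by field_simp
        _ ≤ ‖x‖ * 1 := mul_le_mul_of_nonneg_left this (norm_nonneg x)
        _ = 1 * ‖x‖ := by ring
  · intro i
    show φ i (e i) = 1
    rw [hφ_apply, update_eq_self, ← hd, inv_mul_cancel₀ hdne]
  · intro i j hij
    show φ i (e j) = 0
    rw [hφ_apply]
    have : B.det (update e i (e j)) = 0 := by
      apply (B.det).map_eq_zero_of_eq _ (i := i) (j := j) _ hij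
      simp [update_apply, Ne.symm hij]
    rw [this, mul_zero]

section SuppAux
variable {X : Type*} [NormedAddCommGroup X] [NormedSpace ℝ X]

variable {X : Type*} [NormedAddCommGroup X] [NormedSpace ℝ X]

lemma suppFn_bdd {S : Set X} (hS : S ⊆ Metric.closedBall 0 1) (g : X →L[ℝ] ℝ) :
    BddAbove (Set.range fun a : S => g a) := by
  refine ⟨‖g‖, ?_⟩
  rintro y ⟨a, rfl⟩
  have h1 : ‖(a : X)‖ ≤ 1 := by
    have := hS a.2
    rwa [mem_closedBall, dist_zero_right] at this
  calc g a ≤ ‖g a‖ := le_abs_self _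
    _ ≤ ‖g‖ * ‖(a : X)‖ := g.le_opNorm _
    _ ≤ ‖g‖ * 1 := mul_le_mul_of_nonneg_left h1 (norm_nonneg g)
    _ = ‖g‖ := mul_one _

lemma le_suppFn_of_mem {S : Set X} (hS : S ⊆ Metric.closedBall 0 1) {x : X} (hx : x ∈ S)
    (g : X →L[ℝ] ℝ) : g x ≤ suppFn S g :=
  le_ciSup (suppFn_bdd hS g) (⟨x, hx⟩ : S)

lemma suppFn_le_of_subset {S : Set X} (hS : S ⊆ Metric.closedBall 0 1) (hne : S.Nonempty)
    (g : X →L[ℝ] ℝ) : suppFn S g ≤ ‖g‖ := by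
  have : Nonempty S := hne.to_subtype
  refine ciSup_le fun a => ?_
  have h1 : ‖(a : X)‖ ≤ 1 := by
    have := hS a.2
    rwa [mem_closedBall, dist_zero_right] at this
  calc g a ≤ ‖g a‖ := le_abs_self _
    _ ≤ ‖g‖ * ‖(a : X)‖ := g.le_opNorm _
    _ ≤ ‖g‖ * 1 := mul_le_mul_of_nonneg_left h1 (norm_nonneg g)
    _ = ‖g‖ := mul_one _

lemma suppFn_eq_zero_of_vanish {S : Set X} (hne : S.Nonempty) (g : X →L[ℝ] ℝ)
    (h0 : ∀ x ∈ S, g x = 0) : suppFn S g = 0 := by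
  have : Nonempty S := hne.to_subtype
  have h : (fun a : S => g a) = fun _ => (0 : ℝ) := funext fun a => h0 a a.2
  rw [suppFn, h, ciSup_const]

end SuppAux

/-- if `dim X ≥ 2^n` there are finite-dimensional compact convex subsets
`V 1, ..., V n` of the unit ball such that for every choice of signs `θ k = ±1`,
`‖∑ θ k R(V k)‖ ≥ n/2`, the norm being the sup norm over the dual unit sphere. -/
theorem stmt10 {X : Type*} [NormedAddCommGroup X] [NormedSpace ℝ X] [CompleteSpace X]
    (n : ℕ) (hdim : ((2 ^ n : ℕ) : Cardinal) ≤ Module.rank ℝ X) :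
    ∃ V : Fin n → Set X,
      (∀ k, V k ⊆ Metric.closedBall (0 : X) 1) ∧
      (∀ k, IsCompact (V k)) ∧ (∀ k, Convex ℝ (V k)) ∧
      (∀ k, FiniteDimensional ℝ (Submodule.span ℝ (V k))) ∧
      ∀ θ : Fin n → ℝ, (∀ k, θ k = 1 ∨ θ k = -1) →
        (n : ℝ) / 2 ≤
          ⨆ f : {f : X →L[ℝ] ℝ // ‖f‖ = 1}, |∑ k, θ k * suppFn (V k) f.1| := by
  classical
  -- a linearly independent family indexed by ι := Fin n → Bool
  set ι : Type := Fin n → Bool with hι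
  obtain ⟨s, hscard, hsli⟩ := le_rank_iff_exists_linearIndependent_finset.1 hdim
  have hcard : Fintype.card ι = s.card := by
    simp [hι, hscard, Fintype.card_fun]
  let gequiv : ι ≃ ↥(s : Set X) := Fintype.equivOfCardEq (by simpa using hcard)
  let w : ι → X := fun A => (gequiv A : X)
  have hwli : LinearIndependent ℝ w := hsli.comp _ gequiv.injective
  set W : Submodule ℝ X := Submodule.span ℝ (Set.range w) with hW
  haveI : FiniteDimensional ℝ W := FiniteDimensional.span_of_finite ℝ (Set.finite_range w)
  let B : Module.Basis ι ℝ W := Module.Basis.span hwli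
  obtain ⟨e, f, he1, hf1, hfe1, hfe0⟩ := auerbach B
  -- extend the functionals to X
  choose F hFext hFnorm using fun A : ι => exists_extension_norm_eq W (f A)
  have hFnorm1 : ∀ A, ‖F A‖ = 1 := by
    intro A
    have h1 : f A (e A) = 1 := hfe1 A
    have hge : 1 ≤ ‖f A‖ := by
      have := (f A).le_opNorm (e A)
      rw [h1] at this
      have h2 : ‖(1:ℝ)‖ = 1 := by norm_num
      nlinarith [norm_nonneg (f A), he1 A, this]
    rw [hFnorm A]
    linarith [hf1 A]
  -- the subspaces and sets
  let Y : Fin n → Submodule ℝ X := fun k =>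
    Submodule.span ℝ ((fun B : ι => ((e B : X))) '' {B : ι | B k = true})
  haveI hYfd : ∀ k, FiniteDimensional ℝ (Y k) := fun k =>
    FiniteDimensional.span_of_finite ℝ ((Set.toFinite _).image _)
  let V : Fin n → Set X := fun k => Subtype.val '' (Metric.closedBall (0 : Y k) 1)
  have hVsub : ∀ k, V k ⊆ Metric.closedBall (0 : X) 1 := by
    rintro k x ⟨y, hy, rfl⟩
    rw [mem_closedBall, dist_zero_right] at hy ⊢
    exact hy
  have hV0 : ∀ k, (0 : X) ∈ V k := fun k => ⟨0, mem_closedBall_self zero_le_one, rfl⟩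
  have heV : ∀ (k) (A : ι), A k = true → (e A : X) ∈ V k := by
    intro k A hA
    have hmem : (e A : X) ∈ Y k := Submodule.subset_span ⟨A, hA, rfl⟩
    refine ⟨⟨(e A : X), hmem⟩, ?_, rfl⟩
    rw [mem_closedBall, dist_zero_right]
    exact he1 A
  refine ⟨V, hVsub, ?_, ?_, ?_, ?_⟩
  · intro k
    exact ((isCompact_closedBall _ _).image continuous_subtype_val)
  · intro k
    have := (convex_closedBall (0 : Y k) 1).linear_image (Y k).subtype
    simpa [V] using this
  · intro k
    have hle : Submodule.span ℝ (V k) ≤ Y k := by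
      rw [Submodule.span_le]
      rintro x ⟨y, _, rfl⟩
      exact y.2
    exact Submodule.finiteDimensional_of_le hle
  · intro θ hθ
    -- the key computation
    have hbdd : BddAbove (Set.range fun g : {f : X →L[ℝ] ℝ // ‖f‖ = 1} =>
        |∑ k, θ k * suppFn (V k) g.1|) := by
      refine ⟨n, ?_⟩
      rintro y ⟨g, rfl⟩
      calc |∑ k, θ k * suppFn (V k) g.1| ≤ ∑ k, |θ k * suppFn (V k) g.1| :=
            Finset.abs_sum_le_sum_abs _ _
        _ ≤ ∑ _k : Fin n, (1 : ℝ) := by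
            refine Finset.sum_le_sum fun k _ => ?_
            rw [abs_mul]
            have hθk : |θ k| = 1 := by rcases hθ k with h | h <;> simp [h]
            rw [hθk, one_mul, abs_le]
            constructor
            · have h := le_suppFn_of_mem (hVsub k) (hV0 k) g.1
              simp only [map_zero] at h
              linarith
            · have := suppFn_le_of_subset (hVsub k) ⟨0, hV0 k⟩ g.1
              rwa [g.2] at this
        _ = n := by simp
    have hkey : ∀ A : ι, (∑ k, θ k * suppFn (V k) (F A)) = ∑ k, (if A k then θ k else 0) := by
      intro A
      refine Finset.sum_congr rfl fun k _ => ?_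
      by_cases hA : A k
      · have h1 : suppFn (V k) (F A) = 1 := by
          have hAe : (e A : X) ∈ V k := heV k A hA
          have hle1 : suppFn (V k) (F A) ≤ 1 := by
            have := suppFn_le_of_subset (hVsub k) ⟨0, hV0 k⟩ (F A)
            rwa [hFnorm1 A] at this
          have hge1 : (1:ℝ) ≤ suppFn (V k) (F A) := by
            have := le_suppFn_of_mem (hVsub k) hAe (F A)
            rwa [hFext A (e A), hfe1 A] at this
          linarith
        simp [hA, h1]
      · have h0 : suppFn (V k) (F A) = 0 := by
          refine suppFn_eq_zero_of_vanish ⟨0, hV0 k⟩ (F A) ?_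
          intro x hx
          obtain ⟨y, _, rfl⟩ := hx
          have hyY : (y : X) ∈ Y k := y.2
          have hker : Y k ≤ LinearMap.ker (F A : X →ₗ[ℝ] ℝ) := by
            rw [Submodule.span_le]
            rintro _ ⟨C, hC, rfl⟩
            have hC' : C k = true := hC
            have hCA : C ≠ A := by
              intro h; rw [h] at hC'; exact hA hC'
            have : F A (e C : X) = f A (e C) := hFext A (e C)
            simp only [SetLike.mem_coe, LinearMap.mem_ker]
            rw [ContinuousLinearMap.coe_coe, this, hfe0 A C (Ne.symm hCA)]
          have := hker hyY
          simpa using this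
        simp [hA, h0]
    -- counting
    set c1 : ℕ := (Finset.univ.filter fun k => θ k = 1).card with hc1
    set c2 : ℕ := (Finset.univ.filter fun k => θ k = -1).card with hc2
    have hsum1 : (∑ k, (if (fun k => decide (θ k = 1)) k then θ k else 0)) = (c1 : ℝ) := by
      rw [hc1]
      rw [← Finset.sum_boole]
      refine Finset.sum_congr rfl fun k _ => ?_
      by_cases h : θ k = 1 <;> simp [h]
    have hsum2 : (∑ k, (if (fun k => decide (θ k = -1)) k then θ k else 0)) = -(c2 : ℝ) := by
      rw [hc2]
      rw [← Finset.sum_boole, ← Finset.sum_neg_distrib]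
      refine Finset.sum_congr rfl fun k _ => ?_
      by_cases h : θ k = -1 <;> simp [h]
    have hc12 : c1 + c2 = n := by
      rw [hc1, hc2]
      have : (Finset.univ.filter fun k => θ k = -1) = (Finset.univ.filter fun k => ¬(θ k = 1)) := by
        refine Finset.filter_congr fun k _ => ?_
        rcases hθ k with h | h <;> simp [h] <;> norm_num
      rw [this, Finset.card_filter_add_card_filter_not]
      simp
    rcases le_total c1 c2 with hc | hc
    · -- use A = indicator of θ = -1
      refine le_ciSup_of_le hbdd ⟨F (fun k => decide (θ k = -1)), hFnorm1 _⟩ ?_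
      rw [hkey, hsum2, abs_neg, Nat.abs_cast]
      have : (n : ℝ) ≤ 2 * c2 := by
        have : n ≤ 2 * c2 := by omega
        exact_mod_cast this
      linarith
    · refine le_ciSup_of_le hbdd ⟨F (fun k => decide (θ k = 1)), hFnorm1 _⟩ ?_
      rw [hkey, hsum1, Nat.abs_cast]
      have : (n : ℝ) ≤ 2 * c1 := by
        have : n ≤ 2 * c1 := by omega
        exact_mod_cast this
      linarith
end

section
/- For every infinite-dimensional Banach space X there exists a sequence (V_n) of finite-dimensional compact convex subsets of the unit ball of X and ε > 0 such that for every sequence (ψ_i) of values in {0,1} and every n ∈ ℕ, the Hausdorff distance ρ_H( (1/4^n) ∑_{i=1}^{4^n} ψ_i V_i , (1/(2·4^n)) ∑_{i=1}^{4^n} V_i ) ≥ ε. -/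
open Pointwise

namespace Stmt11Aux

open Metric Set


variable {X : Type*} [NormedAddCommGroup X] [NormedSpace ℝ X]

lemma exists_norming (E : Submodule ℝ X) [FiniteDimensional ℝ E] :
    ∃ Φ : Finset (X →L[ℝ] ℝ), (∀ φ ∈ Φ, ‖φ‖ ≤ 1) ∧
      ∀ x ∈ E, ∃ φ ∈ Φ, (3/4 : ℝ) * ‖x‖ ≤ φ x := by
  classical
  have hS : IsCompact (sphere (0 : E) 1) := isCompact_sphere 0 1
  obtain ⟨t, ht⟩ := hS.elim_finite_subcover (fun c : E => ball c (1/8))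
    (fun c => isOpen_ball) (fun x hx => mem_iUnion.2 ⟨x, mem_ball_self (by norm_num)⟩)
  let F : E → (X →L[ℝ] ℝ) := fun c =>
    if h : (c : X) ≠ 0 then (exists_dual_vector ℝ (c : X) (norm_ne_zero_iff.mpr h)).choose else 0
  have hF1 : ∀ c : E, (c : X) ≠ 0 → ‖F c‖ = 1 := by
    intro c h; simp only [F, dif_pos h]
    exact (exists_dual_vector ℝ (c : X) (norm_ne_zero_iff.mpr h)).choose_spec.1
  have hF2 : ∀ c : E, (h : (c : X) ≠ 0) → (F c) (c : X) = ‖(c : X)‖ := by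
    intro c h; simp only [F, dif_pos h]
    exact_mod_cast (exists_dual_vector ℝ (c : X) (norm_ne_zero_iff.mpr h)).choose_spec.2
  refine ⟨insert 0 (t.image F), ?_, ?_⟩
  · intro φ hφ
    rcases Finset.mem_insert.mp hφ with rfl | hφ
    · simp
    · obtain ⟨c, _, rfl⟩ := Finset.mem_image.mp hφ
      by_cases h : (c : X) ≠ 0
      · rw [hF1 c h]
      · simp only [F, dif_neg h]; simp
  · intro x hx
    by_cases hx0 : x = 0
    · exact ⟨0, Finset.mem_insert_self _ _, by simp [hx0]⟩
    · set xE : E := ⟨x, hx⟩ with hxE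
      have hxE0 : xE ≠ 0 := by simpa [hxE, Submodule.mk_eq_zero] using hx0
      set y : E := ‖xE‖⁻¹ • xE with hy
      have hyS : y ∈ sphere (0 : E) 1 := by
        simp only [mem_sphere_iff_norm, sub_zero, hy]
        exact norm_smul_inv_norm (𝕜 := ℝ) hxE0
      obtain ⟨c, hct, hyc⟩ := mem_iUnion₂.mp (ht hyS)
      have hyc' : ‖y - c‖ < 1/8 := by
        rw [← dist_eq_norm]; exact mem_ball.mp hyc
      have hcnorm : (7/8 : ℝ) ≤ ‖c‖ := by
        have h1 : ‖y‖ = 1 := by simpa using hyS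
        have := norm_sub_norm_le y c
        linarith
      have hc0 : (c : X) ≠ 0 := by
        intro h
        have hc' : c = 0 := by exact_mod_cast h
        rw [hc', norm_zero] at hcnorm
        linarith
      refine ⟨F c, Finset.mem_insert_of_mem (Finset.mem_image_of_mem F hct), ?_⟩
      have hφc : (F c) (c : X) = ‖c‖ := by rw [hF2 c hc0, Submodule.coe_norm]
      have hφn : ‖F c‖ = 1 := hF1 c hc0
      have hbound : |(F c) ((y : X) - (c : X))| ≤ ‖y - c‖ := by
        calc |(F c) ((y : X) - (c : X))| ≤ ‖F c‖ * ‖(y : X) - (c : X)‖ :=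
              (F c).le_opNorm _
          _ = ‖y - c‖ := by rw [hφn, one_mul, ← AddSubgroupClass.coe_sub]; rfl
      have hφy : (3/4 : ℝ) ≤ (F c) (y : X) := by
        have : (F c) (y : X) = (F c) (c : X) + (F c) ((y : X) - (c : X)) := by
          rw [← map_add]; congr 1; abel
        have habs := abs_le.mp hbound
        rw [this, hφc]
        linarith
      have hxval : (y : X) = ‖x‖⁻¹ • x := by
        simp only [hy, Submodule.coe_smul]
        rfl
      have hxn : ‖x‖ ≠ 0 := by simpa using hx0
      have : (F c) x = ‖x‖ * (F c) (y : X) := by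
        rw [hxval, map_smul, smul_eq_mul]
        field_simp
      rw [this]
      have : 0 ≤ ‖x‖ := norm_nonneg x
      nlinarith

lemma exists_in_kernels (hinf : ¬ FiniteDimensional ℝ X) (G : Finset (X →L[ℝ] ℝ)) :
    ∃ u : X, ‖u‖ = 1 ∧ ∀ φ ∈ G, φ u = 0 := by
  classical
  have hex : ∃ x : X, x ≠ 0 ∧ ∀ φ ∈ G, φ x = 0 := by
    by_contra h
    push_neg at h
    apply hinf
    let L : X →ₗ[ℝ] ({φ // φ ∈ G} → ℝ) :=
      LinearMap.pi (fun φ => (φ.1 : X →L[ℝ] ℝ).toLinearMap)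
    have hL : Function.Injective L := by
      rw [← LinearMap.ker_eq_bot]
      rw [Submodule.eq_bot_iff]
      intro x hx
      by_contra hx0
      obtain ⟨φ, hφG, hφx⟩ := h x hx0
      have : L x ⟨φ, hφG⟩ = 0 := by rw [hx]; rfl
      exact hφx this
    exact FiniteDimensional.of_injective L hL
  obtain ⟨x, hx0, hxk⟩ := hex
  refine ⟨‖x‖⁻¹ • x, norm_smul_inv_norm (𝕜 := ℝ) hx0, ?_⟩
  intro φ hφ
  rw [map_smul, hxk φ hφ, smul_zero]


variable {X : Type*} [NormedAddCommGroup X] [NormedSpace ℝ X]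

lemma keystep (hinf : ¬ FiniteDimensional ℝ X) (D : Finset X) (G : Finset (X →L[ℝ] ℝ)) :
    ∃ p : X × (X →L[ℝ] ℝ), ‖p.1‖ ≤ 1 ∧ (∀ φ ∈ G, φ p.1 = 0) ∧
      ‖p.2‖ ≤ 1 ∧ p.2 p.1 = 1/3 ∧ ∀ d ∈ D, p.2 d = 0 := by
  classical
  set E : Submodule ℝ X := Submodule.span ℝ (D : Set X) with hE
  haveI : FiniteDimensional ℝ E := FiniteDimensional.span_of_finite ℝ D.finite_toSet
  obtain ⟨Φ, hΦ1, hΦ2⟩ := exists_norming E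
  obtain ⟨u, hu1, hu2⟩ := exists_in_kernels hinf (G ∪ Φ)
  have huG : ∀ φ ∈ G, φ u = 0 := fun φ h => hu2 φ (Finset.mem_union_left _ h)
  have huΦ : ∀ φ ∈ Φ, φ u = 0 := fun φ h => hu2 φ (Finset.mem_union_right _ h)
  have hdist : ∀ d ∈ E, (1/3 : ℝ) ≤ ‖u - d‖ := by
    intro d hd
    by_cases hdn : ‖d‖ ≤ 2/3
    · have h1 := norm_sub_norm_le u d
      linarith [hu1 ▸ h1]
    · obtain ⟨φ, hφΦ, hφ⟩ := hΦ2 d hd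
      have h1 : φ (u - d) = - φ d := by rw [map_sub, huΦ φ hφΦ]; ring
      have h2 : |φ (u - d)| ≤ ‖u - d‖ := by
        calc |φ (u - d)| ≤ ‖φ‖ * ‖u - d‖ := φ.le_opNorm _
          _ ≤ 1 * ‖u - d‖ := by
              have := norm_nonneg (u - d)
              nlinarith [hΦ1 φ hφΦ]
          _ = ‖u - d‖ := one_mul _
      have habs := abs_le.mp (h1 ▸ h2)
      have : (1/2 : ℝ) ≤ φ d := by nlinarith
      linarith [habs.1]
  haveI : IsClosed (E : Set X) := Submodule.closed_of_finiteDimensional E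
  have hqu : (1/3 : ℝ) ≤ ‖(Submodule.Quotient.mk u : X ⧸ E)‖ := by
    by_contra hlt
    push_neg at hlt
    obtain ⟨m, hm, hm2⟩ := Submodule.Quotient.norm_mk_lt
      (Submodule.Quotient.mk u : X ⧸ E) (show (0:ℝ) < 1/3 - ‖(Submodule.Quotient.mk u : X ⧸ E)‖ by linarith)
    have hmE : u - m ∈ E := by
      have := (Submodule.Quotient.eq E).mp hm
      simpa using E.neg_mem this
    have := hdist (u - m) hmE
    have hval : u - (u - m) = m := by abel
    rw [hval] at this
    linarith
  have hqne : (Submodule.Quotient.mk u : X ⧸ E) ≠ 0 := by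
    intro h; rw [h, norm_zero] at hqu; linarith
  obtain ⟨g', hg'1, hg'2⟩ := exists_dual_vector ℝ (Submodule.Quotient.mk u : X ⧸ E) (norm_ne_zero_iff.mpr hqne)
  let q : X →L[ℝ] (X ⧸ E) := LinearMap.mkContinuous E.mkQ 1
    (fun x => by simpa using Submodule.Quotient.norm_mk_le E x)
  have hqapp : ∀ x : X, q x = Submodule.Quotient.mk x := fun x => rfl
  set nu : ℝ := ‖(Submodule.Quotient.mk u : X ⧸ E)‖ with hnu
  have hnu0 : nu ≠ 0 := by intro h; rw [h] at hqu; linarith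
  have hg'2' : g' (Submodule.Quotient.mk u) = nu := by exact_mod_cast hg'2
  refine ⟨(u, ((1/3) * nu⁻¹) • (g'.comp q)), by simp [hu1], huG, ?_, ?_, ?_⟩
  · apply ContinuousLinearMap.opNorm_le_bound _ zero_le_one
    intro x
    have h1 : ‖(((1/3) * nu⁻¹) • (g'.comp q)) x‖ = (1/3) * nu⁻¹ * ‖g' (q x)‖ := by
      rw [ContinuousLinearMap.smul_apply, norm_smul, ContinuousLinearMap.comp_apply]
      congr 1
      rw [Real.norm_eq_abs, abs_of_nonneg]
      positivity
    rw [h1]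
    have h2 : ‖g' (q x)‖ ≤ ‖q x‖ := by
      calc ‖g' (q x)‖ ≤ ‖g'‖ * ‖q x‖ := g'.le_opNorm _
        _ = ‖q x‖ := by rw [hg'1, one_mul]
    have h3 : ‖q x‖ ≤ ‖x‖ := by
      rw [hqapp]; exact Submodule.Quotient.norm_mk_le E x
    have hnupos : (0:ℝ) < nu := by linarith
    have hinv : nu⁻¹ ≤ 3 := by
      rw [inv_le_comm₀ hnupos (by norm_num)]
      linarith
    have h4 : (1/3 : ℝ) * nu⁻¹ ≤ 1 := by nlinarith
    have h5 : (0:ℝ) ≤ (1/3) * nu⁻¹ := by positivity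
    calc (1/3) * nu⁻¹ * ‖g' (q x)‖ ≤ (1/3) * nu⁻¹ * ‖x‖ := by
          apply mul_le_mul_of_nonneg_left (le_trans h2 h3) h5
      _ ≤ 1 * ‖x‖ := mul_le_mul_of_nonneg_right h4 (norm_nonneg x)
  · show (((1/3) * nu⁻¹) • (g'.comp q)) u = 1/3
    rw [ContinuousLinearMap.smul_apply, ContinuousLinearMap.comp_apply, hqapp, hg'2',
      smul_eq_mul]
    field_simp
  · intro d hd
    show (((1/3) * nu⁻¹) • (g'.comp q)) d = 0
    rw [ContinuousLinearMap.smul_apply, ContinuousLinearMap.comp_apply, hqapp]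
    have : (Submodule.Quotient.mk d : X ⧸ E) = 0 :=
      (Submodule.Quotient.mk_eq_zero E).mpr (Submodule.subset_span hd)
    rw [this, map_zero, smul_zero]


variable {X : Type*} [NormedAddCommGroup X] [NormedSpace ℝ X]

attribute [local instance] Classical.decEq

noncomputable def bseq (hinf : ¬ FiniteDimensional ℝ X) : ℕ → X × (X →L[ℝ] ℝ)
  | k =>
    Classical.choose (keystep hinf
      ((Finset.range k).attach.image (fun m =>
        (bseq hinf m.1).1))
      ((Finset.range k).attach.image (fun m =>
        (bseq hinf m.1).2)))
  decreasing_by all_goals exact Finset.mem_range.mp m.2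

lemma exists_bio (hinf : ¬ FiniteDimensional ℝ X) :
    ∃ (u : ℕ → X) (g : ℕ → X →L[ℝ] ℝ),
      (∀ k, ‖u k‖ ≤ 1) ∧ (∀ k, ‖g k‖ ≤ 1) ∧
      ∀ k l, (g k) (u l) = if k = l then 1/3 else 0 := by
  classical
  refine ⟨fun k => (bseq hinf k).1, fun k => (bseq hinf k).2, ?_, ?_, ?_⟩ <;>
  · have spec : ∀ k : ℕ,
        ‖(bseq hinf k).1‖ ≤ 1 ∧
        (∀ φ ∈ ((Finset.range k).attach.image (fun m => (bseq hinf m.1).2)), φ (bseq hinf k).1 = 0) ∧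
        ‖(bseq hinf k).2‖ ≤ 1 ∧ (bseq hinf k).2 (bseq hinf k).1 = 1/3 ∧
        ∀ d ∈ ((Finset.range k).attach.image (fun m => (bseq hinf m.1).1)), (bseq hinf k).2 d = 0 := by
      intro k
      rw [bseq]
      exact Classical.choose_spec (keystep hinf _ _)
    first
    | exact fun k => (spec k).1
    | exact fun k => (spec k).2.2.1
    | · intro k l
        rcases lt_trichotomy k l with h | h | h
        · rw [if_neg (Nat.ne_of_lt h)]
          refine (spec l).2.1 _ ?_
          exact Finset.mem_image.mpr ⟨⟨k, Finset.mem_range.mpr h⟩, Finset.mem_attach _ _, rfl⟩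
        · rw [if_pos h, h]
          exact (spec l).2.2.2.1
        · rw [if_neg (Nat.ne_of_gt h)]
          refine (spec k).2.2.2.2 _ ?_
          exact Finset.mem_image.mpr ⟨⟨l, Finset.mem_range.mpr h⟩, Finset.mem_attach _ _, rfl⟩



variable {X : Type*} [NormedAddCommGroup X] [NormedSpace ℝ X]

lemma aux_le_rhoBar {A B : Set X} {c : ℝ} (b : X) (hb : b ∈ B) (hAne : A.Nonempty)
    (hAbd : ∀ x ∈ A, ‖x‖ ≤ 1) (hBbd : ∀ x ∈ B, ‖x‖ ≤ 1)
    (h : ∀ a ∈ A, c ≤ ‖a - b‖) : c ≤ rhoBar A B := by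
  haveI : Nonempty A := hAne.to_subtype
  have step : c ≤ ⨅ a : A, ‖(a : X) - b‖ := le_ciInf (fun a => h a a.2)
  have bdd : BddAbove (Set.range fun y : B => ⨅ a : A, ‖(a : X) - (y : X)‖) := by
    refine ⟨2, ?_⟩
    rintro r ⟨y, rfl⟩
    obtain ⟨a₀, ha₀⟩ := hAne
    have h1 : (⨅ a : A, ‖(a : X) - (y : X)‖) ≤ ‖a₀ - (y : X)‖ :=
      ciInf_le ⟨0, by rintro r ⟨a, rfl⟩; exact norm_nonneg _⟩ (⟨a₀, ha₀⟩ : A)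
    have h2 : ‖a₀ - (y : X)‖ ≤ ‖a₀‖ + ‖(y : X)‖ := norm_sub_le _ _
    have h3 := hAbd a₀ ha₀
    have h4 := hBbd y y.2
    simp only at h1 ⊢
    linarith
  unfold rhoBar
  exact le_trans step (le_ciSup_of_le bdd (⟨b, hb⟩ : B) (le_refl _))

def ee (p : ℕ × Finset ℕ) : ℕ := Encodable.encode p

lemma ee_inj : Function.Injective ee := Encodable.encode_injective

def UU (u0 : ℕ → X) (n : ℕ) (T : Finset ℕ) : X := u0 (ee (n, T))

def GG (g0 : ℕ → X →L[ℝ] ℝ) (n : ℕ) (T : Finset ℕ) : X →L[ℝ] ℝ := g0 (ee (n, T))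

def II (n : ℕ) : Finset ℕ := Finset.Ico (4^n / 4) (4^n)

def blkk (i : ℕ) : ℕ := if i = 0 then 0 else Nat.log 4 i + 1

def gens (u0 : ℕ → X) (i : ℕ) : Set X :=
  insert (0:X) ((fun T => UU u0 (blkk i) T) '' {T : Finset ℕ | T ⊆ II (blkk i) ∧ i ∈ T})

noncomputable def VV (u0 : ℕ → X) (i : ℕ) : Set X := convexHull ℝ (gens u0 i)

variable {u0 : ℕ → X} {g0 : ℕ → X →L[ℝ] ℝ}

lemma hGU (hbio : ∀ k l, (g0 k) (u0 l) = if k = l then 1/3 else 0) (n : ℕ) (T : Finset ℕ)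
    (n' : ℕ) (T' : Finset ℕ) :
    (GG g0 n T) (UU u0 n' T') = if n = n' ∧ T = T' then (3:ℝ)⁻¹ else 0 := by
  show (g0 (ee (n, T))) (u0 (ee (n', T'))) = _
  rw [hbio]
  by_cases h : n = n' ∧ T = T'
  · rw [if_pos (by rw [h.1, h.2]), if_pos h]; norm_num
  · rw [if_neg, if_neg h]
    intro hek
    have h2 := ee_inj hek
    exact h ⟨congrArg Prod.fst h2, congrArg Prod.snd h2⟩

lemma blk_of_mem {i n : ℕ} (hi : i ∈ II n) : blkk i = n := by
  rcases n with _ | m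
  · have h1 : i < 1 := by simpa [II] using (Finset.mem_Ico.mp hi).2
    have : i = 0 := by omega
    simp [blkk, this]
  · have h4 : (4:ℕ)^(m+1) / 4 = 4^m := by
      rw [pow_succ, Nat.mul_div_cancel _ (by norm_num)]
    rw [show II (m+1) = Finset.Ico (4^(m+1)/4) (4^(m+1)) from rfl] at hi
    have hmem := Finset.mem_Ico.mp hi
    rw [h4] at hmem
    have hi1 : 4^m ≤ i := by simpa using hmem.1
    have hi2 : i < 4^(m+1) := hmem.2
    have hipos : i ≠ 0 := by
      have := Nat.one_le_pow m 4 (by norm_num)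
      omega
    simp only [blkk, if_neg hipos]
    rw [Nat.log_eq_of_pow_le_of_lt_pow hi1 hi2]

lemma gens_finite (u0 : ℕ → X) (i : ℕ) : (gens u0 i).Finite := by
  apply Set.Finite.insert
  apply Set.Finite.image
  apply Set.Finite.subset ((II (blkk i)).powerset.finite_toSet)
  intro T hT
  simpa [Finset.mem_powerset] using hT.1

lemma zero_mem_VV (u0 : ℕ → X) (i : ℕ) : (0:X) ∈ VV u0 i :=
  subset_convexHull ℝ _ (Set.mem_insert _ _)

lemma VV_ball (hu0 : ∀ k, ‖u0 k‖ ≤ 1) (i : ℕ) : VV u0 i ⊆ Metric.closedBall (0:X) 1 := by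
  apply convexHull_min _ (convex_closedBall _ _)
  rintro x (rfl | ⟨T, hT, rfl⟩)
  · simp
  · rw [mem_closedBall_zero_iff]
    exact hu0 _

lemma VV_compact (u0 : ℕ → X) (i : ℕ) : IsCompact (VV u0 i) :=
  (gens_finite u0 i).isCompact_convexHull (𝕜 := ℝ)

lemma VV_convex (u0 : ℕ → X) (i : ℕ) : Convex ℝ (VV u0 i) := convex_convexHull ℝ _

lemma VV_findim (u0 : ℕ → X) (i : ℕ) :
    FiniteDimensional ℝ (Submodule.span ℝ (VV u0 i)) := by
  have hsp : Submodule.span ℝ (VV u0 i) = Submodule.span ℝ (gens u0 i) := by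
    apply le_antisymm
    · rw [Submodule.span_le]
      exact convexHull_min Submodule.subset_span (Submodule.span ℝ (gens u0 i)).convex
    · exact Submodule.span_mono (subset_convexHull ℝ _)
  rw [hsp]
  exact FiniteDimensional.span_of_finite ℝ (gens_finite u0 i)

lemma key_bound (hbio : ∀ k l, (g0 k) (u0 l) = if k = l then 1/3 else 0)
    {n : ℕ} {T₀ : Finset ℕ} (hT₀ : T₀ ⊆ II n) (i : ℕ) :
    ∀ w ∈ VV u0 i, (GG g0 n T₀) w ≤ (if i ∈ T₀ then (3:ℝ)⁻¹ else 0) := by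
  intro w hw
  have hconv : Convex ℝ {x : X | (GG g0 n T₀) x ≤ (if i ∈ T₀ then (3:ℝ)⁻¹ else 0)} :=
    convex_halfSpace_le ⟨map_add _, map_smul _⟩ _
  refine convexHull_min ?_ hconv hw
  rintro x (rfl | ⟨T', ⟨hT'sub, hiT'⟩, rfl⟩)
  · simp only [map_zero, Set.mem_setOf_eq]
    split <;> norm_num
  · simp only [Set.mem_setOf_eq]
    rw [hGU hbio]
    split_ifs with h1 h2
    · exact le_refl _
    · exact absurd (h1.2 ▸ hiT') h2
    · norm_num
    · exact le_refl _

lemma mem_VV_of_mem (hbio : True) {n : ℕ} {T₀ : Finset ℕ} (hT₀ : T₀ ⊆ II n)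
    {i : ℕ} (hi : i ∈ T₀) : UU u0 n T₀ ∈ VV u0 i := by
  have hb : blkk i = n := blk_of_mem (hT₀ hi)
  apply subset_convexHull ℝ
  refine Set.mem_insert_of_mem _ ⟨T₀, ⟨?_, hi⟩, ?_⟩
  · rw [hb]; exact hT₀
  · rw [hb]

lemma UU_val (hbio : ∀ k l, (g0 k) (u0 l) = if k = l then 1/3 else 0) (n : ℕ) (T₀ : Finset ℕ) :
    (GG g0 n T₀) (UU u0 n T₀) = (3:ℝ)⁻¹ := by
  rw [hGU hbio]; simp

lemma main_est (hu0 : ∀ k, ‖u0 k‖ ≤ 1) (hg0 : ∀ k, ‖g0 k‖ ≤ 1)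
    (hbio : ∀ k l, (g0 k) (u0 l) = if k = l then 1/3 else 0)
    (ψ : ℕ → ℝ) (hψ : ∀ i, ψ i = 0 ∨ ψ i = 1) (n : ℕ) :
    (1/16 : ℝ) ≤ rhoH
      (((4:ℝ)^n)⁻¹ • ∑ i ∈ Finset.range (4^n), ψ i • VV u0 i)
      ((2*(4:ℝ)^n)⁻¹ • ∑ i ∈ Finset.range (4^n), VV u0 i) := by
  classical
  set N : ℕ := 4^n with hN
  have hNpos : 0 < N := by rw [hN]; positivity
  have hNR : ((4:ℝ)^n) = (N:ℝ) := by rw [hN]; push_cast; ring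
  have hNRpos : (0:ℝ) < (N:ℝ) := by exact_mod_cast hNpos
  have hIsub : II n ⊆ Finset.range N := by
    intro i hi
    exact Finset.mem_range.mpr (Finset.mem_Ico.mp hi).2
  have hIcard : 3 * N ≤ 4 * (II n).card := by
    have h1 : (II n).card = N - N/4 := by
      rw [show II n = Finset.Ico (4^n/4) (4^n) from rfl, Nat.card_Ico, hN]
    have h2 : N/4 * 4 ≤ N := Nat.div_mul_le_self _ _
    omega
  set T : Finset ℕ := (II n).filter (fun i => ψ i = 1) with hT
  have hTsub : T ⊆ II n := Finset.filter_subset _ _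
  -- numeric bound
  have hnum : ∀ (T₀ : Finset ℕ), (II n).card ≤ 2 * T₀.card →
      (1/16:ℝ) ≤ (T₀.card:ℝ) * 3⁻¹ * (2*(4:ℝ)^n)⁻¹ := by
    intro T₀ h1
    have h6 : 6 * N ≤ 16 * T₀.card := by linarith [hIcard]
    have h6R : (6:ℝ) * (N:ℝ) ≤ 16 * (T₀.card:ℝ) := by exact_mod_cast h6
    have htpos : (0:ℝ) < ((N:ℝ))⁻¹ := by positivity
    have ht : (N:ℝ) * (N:ℝ)⁻¹ = 1 := mul_inv_cancel₀ (ne_of_gt hNRpos)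
    have h7 : 6 * ((N:ℝ) * (N:ℝ)⁻¹) ≤ 16 * ((T₀.card:ℝ) * (N:ℝ)⁻¹) := by
      nlinarith [mul_le_mul_of_nonneg_right h6R (le_of_lt htpos)]
    rw [ht] at h7
    rw [hNR, mul_inv]
    nlinarith [h7]
  -- membership of zero
  have h0SA : (0:X) ∈ ∑ i ∈ Finset.range N, ψ i • VV u0 i := by
    have h1 : ∀ i ∈ Finset.range N, (0:X) ∈ ψ i • VV u0 i := by
      intro i _
      have h2 := Set.smul_mem_smul_set (a := ψ i) (zero_mem_VV u0 i)
      rwa [smul_zero] at h2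
    simpa using Set.finset_sum_mem_finset_sum (Finset.range N) _ (fun _ => (0:X)) h1
  have h0SB : (0:X) ∈ ∑ i ∈ Finset.range N, VV u0 i := by
    simpa using Set.finset_sum_mem_finset_sum (Finset.range N) _ (fun _ => (0:X))
      (fun i _ => zero_mem_VV u0 i)
  have h0A : (0:X) ∈ ((4:ℝ)^n)⁻¹ • ∑ i ∈ Finset.range N, ψ i • VV u0 i := by
    simpa using Set.smul_mem_smul_set (a := ((4:ℝ)^n)⁻¹) h0SA
  have h0B : (0:X) ∈ (2*(4:ℝ)^n)⁻¹ • ∑ i ∈ Finset.range N, VV u0 i := by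
    simpa using Set.smul_mem_smul_set (a := (2*(4:ℝ)^n)⁻¹) h0SB
  -- norm bounds
  have hnormSA : ∀ y ∈ ∑ i ∈ Finset.range N, ψ i • VV u0 i, ‖y‖ ≤ (N:ℝ) := by
    intro y hy
    obtain ⟨f, hf, rfl⟩ := (Set.mem_finset_sum _ _ _).mp hy
    calc ‖∑ i ∈ Finset.range N, f i‖ ≤ ∑ i ∈ Finset.range N, ‖f i‖ := norm_sum_le _ _
      _ ≤ ∑ _i ∈ Finset.range N, (1:ℝ) := by
          apply Finset.sum_le_sum
          intro i hi
          obtain ⟨v, hv, hveq⟩ := Set.mem_smul_set.mp (hf hi)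
          rw [← hveq, norm_smul]
          have h1 : ‖v‖ ≤ 1 := mem_closedBall_zero_iff.mp (VV_ball hu0 i hv)
          have h2 : ‖ψ i‖ ≤ 1 := by rcases hψ i with h | h <;> simp [h]
          nlinarith [norm_nonneg v, norm_nonneg (ψ i)]
      _ = (N:ℝ) := by simp
  have hnormSB : ∀ y ∈ ∑ i ∈ Finset.range N, VV u0 i, ‖y‖ ≤ (N:ℝ) := by
    intro y hy
    obtain ⟨f, hf, rfl⟩ := (Set.mem_finset_sum _ _ _).mp hy
    calc ‖∑ i ∈ Finset.range N, f i‖ ≤ ∑ i ∈ Finset.range N, ‖f i‖ := norm_sum_le _ _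
      _ ≤ ∑ _i ∈ Finset.range N, (1:ℝ) := Finset.sum_le_sum (fun i hi =>
          mem_closedBall_zero_iff.mp (VV_ball hu0 i (hf hi)))
      _ = (N:ℝ) := by simp
  have hAball : ∀ x ∈ ((4:ℝ)^n)⁻¹ • ∑ i ∈ Finset.range N, ψ i • VV u0 i, ‖x‖ ≤ 1 := by
    rintro x ⟨y, hy, rfl⟩
    rw [norm_smul, Real.norm_eq_abs, abs_of_nonneg (by positivity), hNR]
    calc (N:ℝ)⁻¹ * ‖y‖ ≤ (N:ℝ)⁻¹ * (N:ℝ) :=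
          mul_le_mul_of_nonneg_left (hnormSA y hy) (by positivity)
      _ = 1 := by field_simp
  have hBball : ∀ x ∈ (2*(4:ℝ)^n)⁻¹ • ∑ i ∈ Finset.range N, VV u0 i, ‖x‖ ≤ 1 := by
    rintro x ⟨y, hy, rfl⟩
    rw [norm_smul, Real.norm_eq_abs, abs_of_nonneg (by positivity), hNR]
    calc (2*(N:ℝ))⁻¹ * ‖y‖ ≤ (2*(N:ℝ))⁻¹ * (N:ℝ) :=
          mul_le_mul_of_nonneg_left (hnormSB y hy) (by positivity)
      _ ≤ 1 := by
          rw [mul_inv]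
          have ht : (N:ℝ)⁻¹ * (N:ℝ) = 1 := inv_mul_cancel₀ (ne_of_gt hNRpos)
          calc (2:ℝ)⁻¹ * (N:ℝ)⁻¹ * (N:ℝ) = 2⁻¹ * ((N:ℝ)⁻¹ * N) := by ring
            _ = 2⁻¹ := by rw [ht, mul_one]
            _ ≤ 1 := by norm_num
  -- generic sum bounds
  have hGsum : ∀ (T₀ : Finset ℕ), T₀ ⊆ II n →
      ∀ y ∈ ∑ i ∈ Finset.range N, VV u0 i, (GG g0 n T₀) y ≤ (T₀.card : ℝ) * 3⁻¹ := by
    intro T₀ hT₀ y hy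
    obtain ⟨f, hf, rfl⟩ := (Set.mem_finset_sum _ _ _).mp hy
    rw [map_sum]
    calc ∑ i ∈ Finset.range N, (GG g0 n T₀) (f i)
        ≤ ∑ i ∈ Finset.range N, (if i ∈ T₀ then (3:ℝ)⁻¹ else 0) :=
          Finset.sum_le_sum (fun i hi => key_bound hbio hT₀ i _ (hf hi))
      _ = (T₀.card : ℝ) * 3⁻¹ := by
          rw [Finset.sum_ite_mem, Finset.inter_eq_right.mpr (hT₀.trans hIsub)]
          simp [nsmul_eq_mul]
  have heltmem : ∀ (T₀ : Finset ℕ), T₀ ⊆ II n →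
      (∑ i ∈ Finset.range N, (if i ∈ T₀ then UU u0 n T₀ else 0)) ∈
        ∑ i ∈ Finset.range N, VV u0 i := by
    intro T₀ hT₀
    apply Set.finset_sum_mem_finset_sum
    intro i _
    split_ifs with h
    · exact mem_VV_of_mem trivial hT₀ h
    · exact zero_mem_VV u0 i
  have helt : ∀ (T₀ : Finset ℕ), T₀ ⊆ II n →
      (GG g0 n T₀) (∑ i ∈ Finset.range N, (if i ∈ T₀ then UU u0 n T₀ else 0)) =
        (T₀.card : ℝ) * 3⁻¹ := by
    intro T₀ hT₀
    rw [map_sum]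
    have h1 : ∀ i ∈ Finset.range N,
        (GG g0 n T₀) (if i ∈ T₀ then UU u0 n T₀ else 0) = (if i ∈ T₀ then (3:ℝ)⁻¹ else 0) := by
      intro i _
      split_ifs with h
      · exact UU_val hbio n T₀
      · simp
    rw [Finset.sum_congr rfl h1, Finset.sum_ite_mem,
      Finset.inter_eq_right.mpr (hT₀.trans hIsub)]
    simp [nsmul_eq_mul]
  -- norm-vs-functional bound
  have hnormfromG : ∀ (T₀ : Finset ℕ) (x y : X),
      (GG g0 n T₀) x - (GG g0 n T₀) y ≤ ‖y - x‖ := by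
    intro T₀ x y
    have h2 := (GG g0 n T₀).le_opNorm (y - x)
    have h3 : ‖GG g0 n T₀‖ ≤ 1 := hg0 _
    have h4 : (GG g0 n T₀) x - (GG g0 n T₀) y = -((GG g0 n T₀) (y - x)) := by
      rw [map_sub]; ring
    rw [h4]
    calc -((GG g0 n T₀) (y - x)) ≤ |(GG g0 n T₀) (y - x)| := neg_le_abs _
      _ = ‖(GG g0 n T₀) (y - x)‖ := (Real.norm_eq_abs _).symm
      _ ≤ ‖GG g0 n T₀‖ * ‖y - x‖ := h2
      _ ≤ ‖y - x‖ := by nlinarith [norm_nonneg (y - x)]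
  by_cases hc : (II n).card ≤ 2 * T.card
  · -- case A : use rhoBar B' A'
    set aelt : X := ∑ i ∈ Finset.range N, ψ i • (if i ∈ T then UU u0 n T else 0) with haelt
    have haelt_mem : aelt ∈ ∑ i ∈ Finset.range N, ψ i • VV u0 i := by
      apply Set.finset_sum_mem_finset_sum
      intro i _
      apply Set.smul_mem_smul_set
      split_ifs with h
      · exact mem_VV_of_mem trivial hTsub h
      · exact zero_mem_VV u0 i
    have hGaelt : (GG g0 n T) aelt = (T.card:ℝ) * 3⁻¹ := by
      rw [haelt, map_sum]
      have h1 : ∀ i ∈ Finset.range N,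
          (GG g0 n T) (ψ i • (if i ∈ T then UU u0 n T else 0)) =
            (if i ∈ T then (3:ℝ)⁻¹ else 0) := by
        intro i _
        rw [map_smul, smul_eq_mul]
        split_ifs with h
        · rw [UU_val hbio n T]
          have hψ1 : ψ i = 1 := (Finset.mem_filter.mp h).2
          rw [hψ1, one_mul]
        · rw [map_zero, mul_zero]
      rw [Finset.sum_congr rfl h1, Finset.sum_ite_mem,
        Finset.inter_eq_right.mpr (hTsub.trans hIsub)]
      simp [nsmul_eq_mul]
    set a : X := ((4:ℝ)^n)⁻¹ • aelt with ha
    have hamem : a ∈ ((4:ℝ)^n)⁻¹ • ∑ i ∈ Finset.range N, ψ i • VV u0 i :=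
      Set.smul_mem_smul_set haelt_mem
    have hlow : ∀ y ∈ (2*(4:ℝ)^n)⁻¹ • ∑ i ∈ Finset.range N, VV u0 i,
        (1/16:ℝ) ≤ ‖y - a‖ := by
      rintro y' ⟨y, hy, rfl⟩
      have hGy : (GG g0 n T) ((2*(4:ℝ)^n)⁻¹ • y) ≤ (2*(4:ℝ)^n)⁻¹ * ((T.card:ℝ) * 3⁻¹) := by
        rw [map_smul, smul_eq_mul]
        exact mul_le_mul_of_nonneg_left (hGsum T hTsub y hy) (by positivity)
      have hGa : (GG g0 n T) a = ((4:ℝ)^n)⁻¹ * ((T.card:ℝ) * 3⁻¹) := by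
        rw [ha, map_smul, smul_eq_mul, hGaelt]
      have hw : ((4:ℝ)^n)⁻¹ = 2 * (2*(4:ℝ)^n)⁻¹ := by
        field_simp
      have hnumT := hnum T hc
      have hdiff : (1/16:ℝ) ≤ (GG g0 n T) a - (GG g0 n T) ((2*(4:ℝ)^n)⁻¹ • y) := by
        rw [hGa, hw]
        nlinarith [hGy, hnumT]
      linarith [hnormfromG T a ((2*(4:ℝ)^n)⁻¹ • y), hdiff]
    have hrb : (1/16:ℝ) ≤ rhoBar ((2*(4:ℝ)^n)⁻¹ • ∑ i ∈ Finset.range N, VV u0 i)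
        (((4:ℝ)^n)⁻¹ • ∑ i ∈ Finset.range N, ψ i • VV u0 i) :=
      aux_le_rhoBar a hamem ⟨0, h0B⟩ hBball hAball hlow
    unfold rhoH
    exact le_trans hrb (le_max_right _ _)
  · -- case B : use rhoBar A' B'
    push_neg at hc
    set T' : Finset ℕ := II n \ T with hT'
    have hT'sub : T' ⊆ II n := Finset.sdiff_subset
    have hT'card : (II n).card ≤ 2 * T'.card := by
      have h1 : T'.card = (II n).card - T.card := Finset.card_sdiff_of_subset hTsub
      have h2 : T.card ≤ (II n).card := Finset.card_le_card hTsub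
      omega
    set belt : X := ∑ i ∈ Finset.range N, (if i ∈ T' then UU u0 n T' else 0) with hbelt
    set b : X := (2*(4:ℝ)^n)⁻¹ • belt with hb
    have hbmem : b ∈ (2*(4:ℝ)^n)⁻¹ • ∑ i ∈ Finset.range N, VV u0 i :=
      Set.smul_mem_smul_set (heltmem T' hT'sub)
    have hGb : (GG g0 n T') b = (2*(4:ℝ)^n)⁻¹ * ((T'.card:ℝ) * 3⁻¹) := by
      rw [hb, map_smul, smul_eq_mul, helt T' hT'sub]
    have hGA : ∀ x ∈ ((4:ℝ)^n)⁻¹ • ∑ i ∈ Finset.range N, ψ i • VV u0 i,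
        (GG g0 n T') x ≤ 0 := by
      rintro x ⟨y, hy, rfl⟩
      obtain ⟨f, hf, rfl⟩ := (Set.mem_finset_sum _ _ _).mp hy
      have hfe : ∀ i ∈ Finset.range N, (GG g0 n T') (f i) ≤ 0 := by
        intro i hi
        obtain ⟨v, hv, hveq⟩ := Set.mem_smul_set.mp (hf hi)
        rw [← hveq, map_smul, smul_eq_mul]
        rcases hψ i with h | h
        · rw [h, zero_mul]
        · rw [h, one_mul]
          have hk := key_bound hbio hT'sub i v hv
          have hiT' : i ∉ T' := by
            intro hmem
            have hiIn : i ∈ II n := hT'sub hmem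
            have : i ∈ T := Finset.mem_filter.mpr ⟨hiIn, h⟩
            exact (Finset.mem_sdiff.mp hmem).2 this
          rw [if_neg hiT'] at hk
          exact hk
      have hsum : (GG g0 n T') (∑ i ∈ Finset.range N, f i) ≤ 0 := by
        rw [map_sum]
        exact Finset.sum_nonpos hfe
      rw [map_smul, smul_eq_mul]
      have := mul_le_mul_of_nonneg_left hsum (show (0:ℝ) ≤ ((4:ℝ)^n)⁻¹ by positivity)
      simpa using this
    have hnumT := hnum T' hT'card
    have hlow : ∀ x ∈ ((4:ℝ)^n)⁻¹ • ∑ i ∈ Finset.range N, ψ i • VV u0 i,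
        (1/16:ℝ) ≤ ‖x - b‖ := by
      intro x hx
      have hdiff : (1/16:ℝ) ≤ (GG g0 n T') b - (GG g0 n T') x := by
        rw [hGb]
        have := hGA x hx
        nlinarith
      linarith [hnormfromG T' b x, hdiff]
    have hrb : (1/16:ℝ) ≤ rhoBar (((4:ℝ)^n)⁻¹ • ∑ i ∈ Finset.range N, ψ i • VV u0 i)
        ((2*(4:ℝ)^n)⁻¹ • ∑ i ∈ Finset.range N, VV u0 i) :=
      aux_le_rhoBar b hbmem ⟨0, h0A⟩ hAball hBball hlow
    unfold rhoH
    exact le_trans hrb (le_max_left _ _)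

end Stmt11Aux

/-- in every infinite-dimensional Banach space `X` there is a sequence
`(V i)` of finite-dimensional compact convex subsets of the unit ball and `ε > 0` such
that for every `0`-`1` sequence `(ψ i)` and every `n`,
`ρ_H( 4⁻ⁿ ∑_{i<4ⁿ} ψ i • V i , (2·4ⁿ)⁻¹ ∑_{i<4ⁿ} V i ) ≥ ε`
(sums are Minkowski sums). This shows the full form of the SLLN for random sets fails. -/
theorem stmt11 {X : Type*} [NormedAddCommGroup X] [NormedSpace ℝ X] [CompleteSpace X]
    (hinf : ¬ FiniteDimensional ℝ X) :
    ∃ V : ℕ → Set X,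
      (∀ i, V i ⊆ Metric.closedBall (0 : X) 1) ∧
      (∀ i, IsCompact (V i)) ∧ (∀ i, Convex ℝ (V i)) ∧
      (∀ i, FiniteDimensional ℝ (Submodule.span ℝ (V i))) ∧
      ∃ ε > (0 : ℝ), ∀ ψ : ℕ → ℝ, (∀ i, ψ i = 0 ∨ ψ i = 1) → ∀ n : ℕ,
        ε ≤ rhoH
          (((4 : ℝ) ^ n)⁻¹ • ∑ i ∈ Finset.range (4 ^ n), ψ i • V i)
          ((2 * (4 : ℝ) ^ n)⁻¹ • ∑ i ∈ Finset.range (4 ^ n), V i) := by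
  obtain ⟨U0, G0, hu0, hg0, hbio⟩ := Stmt11Aux.exists_bio hinf
  refine ⟨Stmt11Aux.VV U0, fun i => Stmt11Aux.VV_ball hu0 i,
    fun i => Stmt11Aux.VV_compact U0 i, fun i => Stmt11Aux.VV_convex U0 i,
    fun i => Stmt11Aux.VV_findim U0 i, 1/16, by norm_num, ?_⟩
  intro ψ hψ n
  exact Stmt11Aux.main_est hu0 hg0 hbio ψ hψ n
end

section
/- Let X be a finite-dimensional Banach space, (Ω, Σ, μ) a probability space, and (Ψ_n) a uniformly bounded independent sequence of random convex bounded sets with expectations E(Ψ_n) = U_n. Then ρ_H( (1/n)∑_{i=1}^n Ψ_i(ω), (1/n)∑_{i=1}^n U_i ) → 0 almost everywhere. -/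
open Pointwise MeasureTheory

/-- The unit sphere of the dual space `X*`. -/
def DualSphere (X : Type*) [NormedAddCommGroup X] [NormedSpace ℝ X] :=
  {f : X →L[ℝ] ℝ // ‖f‖ = 1}

/-- The Rådström embedding of a set, viewed as the family of values of its support
function on the dual unit sphere. -/
noncomputable def Rad {X : Type*} [NormedAddCommGroup X] [NormedSpace ℝ X]
    (A : Set X) : DualSphere X → ℝ :=
  fun f => suppFn A f.1

/-- `‖A‖ = sup_{a ∈ A} ‖a‖`. -/
noncomputable def setNorm {X : Type*} [NormedAddCommGroup X] (A : Set X) : ℝ :=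
  ⨆ a : A, ‖(a : X)‖

open Bornology ProbabilityTheory Filter Finset
open scoped ENNReal NNReal

section supp
variable {X : Type*} [NormedAddCommGroup X] [NormedSpace ℝ X]

lemma bddAbove_range_of_bounded {A : Set X} (hA : IsBounded A) (f : X →L[ℝ] ℝ) :
    BddAbove (Set.range fun a : A => f (a : X)) := by
  obtain ⟨C, hC⟩ := hA.subset_closedBall 0
  refine ⟨‖f‖ * C, ?_⟩
  rintro x ⟨a, rfl⟩
  have ha : ‖(a : X)‖ ≤ C := by
    have := hC a.2
    simpa [Metric.mem_closedBall, dist_eq_norm] using this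
  calc f (a:X) ≤ ‖f (a:X)‖ := le_abs_self _
    _ ≤ ‖f‖ * ‖(a:X)‖ := f.le_opNorm _
    _ ≤ ‖f‖ * C := mul_le_mul_of_nonneg_left ha (norm_nonneg f)

lemma le_suppFn {A : Set X} (hA : IsBounded A) {a : X} (ha : a ∈ A) (f : X →L[ℝ] ℝ) :
    f a ≤ suppFn A f :=
  le_ciSup (bddAbove_range_of_bounded hA f) (⟨a, ha⟩ : A)

lemma suppFn_le {A : Set X} (hA : A.Nonempty) {f : X →L[ℝ] ℝ} {M : ℝ}
    (h : ∀ a ∈ A, f a ≤ M) : suppFn A f ≤ M := by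
  haveI := hA.to_subtype
  exact ciSup_le fun a => h a a.2

lemma abs_suppFn_le {A : Set X} {C : ℝ} (hne : A.Nonempty)
    (hsub : A ⊆ Metric.closedBall 0 C) (f : X →L[ℝ] ℝ) :
    |suppFn A f| ≤ ‖f‖ * C := by
  have hbd : IsBounded A := Metric.isBounded_closedBall.subset hsub
  have hnorm : ∀ a ∈ A, ‖(a : X)‖ ≤ C := fun a ha => by
    simpa [Metric.mem_closedBall, dist_eq_norm] using hsub ha
  rw [abs_le]
  constructor
  · obtain ⟨a, ha⟩ := hne
    have h1 : |f a| ≤ ‖f‖ * C := by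
      calc |f a| ≤ ‖f‖ * ‖a‖ := f.le_opNorm a
        _ ≤ ‖f‖ * C := mul_le_mul_of_nonneg_left (hnorm a ha) (norm_nonneg f)
    have := le_suppFn hbd ha f
    linarith [neg_abs_le (f a)]
  · refine suppFn_le hne fun a ha => ?_
    calc f a ≤ |f a| := le_abs_self _
      _ ≤ ‖f‖ * ‖a‖ := f.le_opNorm a
      _ ≤ ‖f‖ * C := mul_le_mul_of_nonneg_left (hnorm a ha) (norm_nonneg f)

lemma suppFn_sub_le {A : Set X} {C : ℝ} (hne : A.Nonempty)
    (hsub : A ⊆ Metric.closedBall 0 C) (f g : X →L[ℝ] ℝ) :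
    suppFn A f - suppFn A g ≤ ‖f - g‖ * C := by
  have hbd : IsBounded A := Metric.isBounded_closedBall.subset hsub
  have hnorm : ∀ a ∈ A, ‖(a : X)‖ ≤ C := fun a ha => by
    simpa [Metric.mem_closedBall, dist_eq_norm] using hsub ha
  rw [sub_le_iff_le_add]
  refine suppFn_le hne fun a ha => ?_
  have h1 : f a - g a ≤ ‖f - g‖ * C := by
    calc f a - g a = (f - g) a := by simp
      _ ≤ |(f - g) a| := le_abs_self _
      _ ≤ ‖f - g‖ * ‖a‖ := (f - g).le_opNorm a
      _ ≤ ‖f - g‖ * C := mul_le_mul_of_nonneg_left (hnorm a ha) (norm_nonneg _)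
  have h2 : g a ≤ suppFn A g := le_suppFn hbd ha g
  linarith

lemma abs_suppFn_sub_le {A : Set X} {C : ℝ} (hne : A.Nonempty)
    (hsub : A ⊆ Metric.closedBall 0 C) (f g : X →L[ℝ] ℝ) :
    |suppFn A f - suppFn A g| ≤ ‖f - g‖ * C := by
  rw [abs_le]
  constructor
  · have := suppFn_sub_le hne hsub g f
    rw [norm_sub_rev] at this
    linarith
  · exact suppFn_sub_le hne hsub f g

lemma suppFn_add {A B : Set X} (hAne : A.Nonempty) (hAb : IsBounded A)
    (hBne : B.Nonempty) (hBb : IsBounded B) (f : X →L[ℝ] ℝ) :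
    suppFn (A + B) f = suppFn A f + suppFn B f := by
  apply le_antisymm
  · refine suppFn_le (hAne.add hBne) fun x hx => ?_
    obtain ⟨a, ha, b, hb, rfl⟩ := Set.mem_add.1 hx
    rw [map_add]
    exact add_le_add (le_suppFn hAb ha f) (le_suppFn hBb hb f)
  · have key : ∀ a ∈ A, ∀ b ∈ B, f a + f b ≤ suppFn (A + B) f := by
      intro a ha b hb
      rw [← map_add]
      exact le_suppFn (hAb.add hBb) (Set.add_mem_add ha hb) f
    haveI := hAne.to_subtype
    haveI := hBne.to_subtype
    have h1 : ∀ a ∈ A, f a ≤ suppFn (A + B) f - suppFn B f := by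
      intro a ha
      rw [le_sub_iff_add_le, add_comm, ← le_sub_iff_add_le]
      exact suppFn_le hBne fun b hb => le_sub_iff_add_le.2 (by linarith [key a ha b hb])
    have h2 : suppFn A f ≤ suppFn (A + B) f - suppFn B f := suppFn_le hAne h1
    linarith

end supp

section supp2
variable {X : Type*} [NormedAddCommGroup X] [NormedSpace ℝ X]

lemma suppFn_smul {A : Set X} (hAne : A.Nonempty) (hAb : IsBounded A)
    {c : ℝ} (hc : 0 < c) (f : X →L[ℝ] ℝ) :
    suppFn (c • A) f = c * suppFn A f := by
  apply le_antisymm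
  · refine suppFn_le (hAne.smul_set) fun x hx => ?_
    obtain ⟨a, ha, rfl⟩ := hx
    simp only [ContinuousLinearMap.map_smul, smul_eq_mul]
    exact mul_le_mul_of_nonneg_left (le_suppFn hAb ha f) hc.le
  · rw [mul_comm, ← le_div_iff₀ hc]
    refine suppFn_le hAne fun a ha => ?_
    rw [le_div_iff₀ hc, mul_comm]
    have : f (c • a) ≤ suppFn (c • A) f :=
      le_suppFn (hAb.smul₀ c) (Set.smul_mem_smul_set ha) f
    simpa [ContinuousLinearMap.map_smul, smul_eq_mul] using this

lemma suppFn_zero_set (f : X →L[ℝ] ℝ) : suppFn (0 : Set X) f = 0 := by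
  show (⨆ a : ({0} : Set X), f (a : X)) = 0
  rw [ciSup_unique]
  show f (0 : X) = 0
  simp

lemma sum_set_nonempty_bounded (A : ℕ → Set X) (hne : ∀ i, (A i).Nonempty)
    (hb : ∀ i, IsBounded (A i)) (n : ℕ) :
    (∑ i ∈ Finset.range n, A i).Nonempty ∧ IsBounded (∑ i ∈ Finset.range n, A i) := by
  induction n with
  | zero => simp only [Finset.range_zero, Finset.sum_empty]
            exact ⟨⟨0, rfl⟩, isBounded_singleton⟩
  | succ n ih =>
      rw [Finset.sum_range_succ]
      exact ⟨ih.1.add (hne n), ih.2.add (hb n)⟩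

lemma sum_set_convex (A : ℕ → Set X) (hc : ∀ i, Convex ℝ (A i)) (n : ℕ) :
    Convex ℝ (∑ i ∈ Finset.range n, A i) := by
  induction n with
  | zero => simp only [Finset.range_zero, Finset.sum_empty]
            exact convex_singleton 0
  | succ n ih => rw [Finset.sum_range_succ]; exact ih.add (hc n)

lemma suppFn_sum (A : ℕ → Set X) (hne : ∀ i, (A i).Nonempty)
    (hb : ∀ i, IsBounded (A i)) (f : X →L[ℝ] ℝ) (n : ℕ) :
    suppFn (∑ i ∈ Finset.range n, A i) f = ∑ i ∈ Finset.range n, suppFn (A i) f := by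
  induction n with
  | zero => simp only [Finset.range_zero, Finset.sum_empty]; exact suppFn_zero_set f
  | succ n ih =>
      rw [Finset.sum_range_succ, Finset.sum_range_succ, ← ih]
      exact suppFn_add (sum_set_nonempty_bounded A hne hb n).1
        (sum_set_nonempty_bounded A hne hb n).2 (hne n) (hb n) f

lemma rhoBar_nonneg {A B : Set X} : 0 ≤ rhoBar A B :=
  Real.iSup_nonneg fun _ => Real.iInf_nonneg fun _ => norm_nonneg _

lemma rhoH_nonneg {A B : Set X} : 0 ≤ rhoH A B :=
  le_trans rhoBar_nonneg (le_max_left _ _)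

/-- Key geometric lemma (Hörmander-type estimate via Hahn–Banach separation). -/
lemma iInf_dist_le {A : Set X} (hA : Convex ℝ A) (hne : A.Nonempty) (b : X) {ε : ℝ}
    (hε : 0 ≤ ε) (h : ∀ u : X →L[ℝ] ℝ, ‖u‖ = 1 → u b ≤ suppFn A u + ε) :
    (⨅ a : A, ‖(a : X) - b‖) ≤ ε := by
  by_contra hlt
  push_neg at hlt
  obtain ⟨s, hs1, hs2⟩ := exists_between hlt
  obtain ⟨r, hr1, hr2⟩ := exists_between hs2
  have hs0 : 0 < s := lt_of_le_of_lt hε hs1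
  have hr0 : 0 < r := lt_trans hs0 hr1
  have hbdd : BddBelow (Set.range fun a : A => ‖(a : X) - b‖) :=
    ⟨0, by rintro x ⟨a, rfl⟩; exact norm_nonneg _⟩
  have hdisj : Disjoint (Metric.ball b r) A := by
    rw [Set.disjoint_left]
    intro x hx hxA
    have h1 : (⨅ a : A, ‖(a : X) - b‖) ≤ ‖x - b‖ := ciInf_le hbdd (⟨x, hxA⟩ : A)
    rw [Metric.mem_ball, dist_eq_norm] at hx
    linarith
  obtain ⟨f, c, hfs, hft⟩ := geometric_hahn_banach_open (convex_ball b r)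
    Metric.isOpen_ball hA hdisj
  have hfb : f b < c := hfs b (Metric.mem_ball_self hr0)
  obtain ⟨a₀, ha₀⟩ := id hne
  have hf0 : f ≠ 0 := by
    intro h0
    have h1 := hft a₀ ha₀
    rw [h0] at hfb h1
    simp at hfb h1
    linarith
  have hfpos : 0 < ‖f‖ := norm_pos_iff.2 hf0
  -- ‖f‖ * s ≤ c - f b
  have hkey : ‖f‖ * s ≤ c - f b := by
    have hop : ‖f‖ ≤ (c - f b) / s := by
      refine f.opNorm_le_bound (div_nonneg (by linarith) hs0.le) fun x => ?_
      rcases eq_or_ne x 0 with rfl | hx0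
      · simp
      · have hxpos : 0 < ‖x‖ := norm_pos_iff.2 hx0
        set v : X := (s / ‖x‖) • x with hv
        have hvn : ‖v‖ = s := by
          rw [hv, norm_smul, Real.norm_eq_abs, abs_of_pos (div_pos hs0 hxpos),
            div_mul_cancel₀ _ hxpos.ne']
        have hmem : ∀ w : X, ‖w‖ = s → b + w ∈ Metric.ball b r := by
          intro w hw
          rw [Metric.mem_ball, dist_eq_norm]
          simpa [hw] using hr1
        have h1 : f v < c - f b := by
          have := hfs (b + v) (hmem v hvn)
          rw [map_add] at this; linarith
        have h2 : -f v < c - f b := by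
          have := hfs (b + (-v)) (hmem (-v) (by rw [norm_neg, hvn]))
          rw [map_add, map_neg] at this; linarith
        have habs : |f v| ≤ c - f b := abs_le.2 ⟨by linarith, h1.le⟩
        have hfv : |f v| = s / ‖x‖ * |f x| := by
          rw [hv]
          simp only [ContinuousLinearMap.map_smul, smul_eq_mul, abs_mul]
          rw [abs_of_pos (div_pos hs0 hxpos)]
        rw [hfv] at habs
        have h3 := mul_le_mul_of_nonneg_right habs hxpos.le
        rw [div_mul_eq_mul_div, div_mul_cancel₀ _ hxpos.ne'] at h3
        rw [Real.norm_eq_abs, div_mul_eq_mul_div, le_div_iff₀ hs0]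
        linarith [mul_comm (|f x|) s]
    calc ‖f‖ * s ≤ ((c - f b) / s) * s := mul_le_mul_of_nonneg_right hop hs0.le
      _ = c - f b := div_mul_cancel₀ _ hs0.ne'
  set u : X →L[ℝ] ℝ := -(‖f‖⁻¹ • f) with hu
  have hun : ‖u‖ = 1 := by
    rw [hu, norm_neg]
    refine (norm_smul (‖f‖⁻¹ : ℝ) f).trans ?_
    rw [Real.norm_eq_abs, abs_of_pos (inv_pos.2 hfpos)]
    exact inv_mul_cancel₀ hfpos.ne'
  have hsupp : suppFn A u ≤ -(‖f‖⁻¹ * c) := by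
    refine suppFn_le hne fun a ha => ?_
    have : ‖f‖⁻¹ * c ≤ ‖f‖⁻¹ * f a :=
      mul_le_mul_of_nonneg_left (hft a ha) (inv_nonneg.2 hfpos.le)
    have hval : u a = -(‖f‖⁻¹ * f a) := by simp [hu]
    rw [hval]; linarith
  have hub : u b = -(‖f‖⁻¹ * f b) := by simp [hu]
  have hcontr := h u hun
  rw [hub] at hcontr
  -- s ≤ ‖f‖⁻¹ * (c - f b)
  have h3 : s ≤ ‖f‖⁻¹ * (c - f b) := by
    have := mul_le_mul_of_nonneg_left hkey (inv_nonneg.2 hfpos.le)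
    rwa [← mul_assoc, inv_mul_cancel₀ hfpos.ne', one_mul] at this
  rw [mul_sub] at h3
  linarith

lemma rhoBar_le {A B : Set X} (hA : Convex ℝ A) (hAne : A.Nonempty)
    (hBne : B.Nonempty) (hBb : IsBounded B) {ε : ℝ} (hε : 0 ≤ ε)
    (h : ∀ u : X →L[ℝ] ℝ, ‖u‖ = 1 → suppFn B u ≤ suppFn A u + ε) : rhoBar A B ≤ ε := by
  haveI := hBne.to_subtype
  exact ciSup_le fun b => iInf_dist_le hA hAne b hε fun u hu =>
    le_trans (le_suppFn hBb b.2 u) (h u hu)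

end supp2

/-- Deterministic interpolation: convergence along squares plus boundedness gives full
convergence of averages. -/
lemma avg_tendsto_of_sq (K : ℝ) (hK : 0 ≤ K) (y : ℕ → ℝ) (hb : ∀ i, |y i| ≤ K)
    (h : Tendsto (fun n : ℕ => ((n : ℝ) ^ 2)⁻¹ * ∑ i ∈ range (n ^ 2), y i) atTop (nhds 0)) :
    Tendsto (fun m : ℕ => ((m : ℝ))⁻¹ * ∑ i ∈ range m, y i) atTop (nhds 0) := by
  have hsqrt : Tendsto (fun m : ℕ => Nat.sqrt m) atTop atTop := by
    refine tendsto_atTop_atTop.2 fun b => ⟨b * b, fun m hm => ?_⟩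
    calc b = Nat.sqrt (b * b) := by rw [← pow_two, Nat.sqrt_eq']
      _ ≤ Nat.sqrt m := Nat.sqrt_le_sqrt hm
  have habs : Tendsto (fun n : ℕ => |((n : ℝ) ^ 2)⁻¹ * ∑ i ∈ range (n ^ 2), y i|)
      atTop (nhds 0) := by
    have := h.abs
    simpa using this
  have hKn : Tendsto (fun n : ℕ => 3 * K / (n : ℝ)) atTop (nhds 0) :=
    tendsto_const_div_atTop_nhds_zero_nat (3 * K)
  have hg : Tendsto (fun m : ℕ =>
      |((Nat.sqrt m : ℝ) ^ 2)⁻¹ * ∑ i ∈ range (Nat.sqrt m ^ 2), y i|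
        + 3 * K / (Nat.sqrt m : ℝ)) atTop (nhds 0) := by
    have h1 := habs.comp hsqrt
    have h2 := hKn.comp hsqrt
    simpa using h1.add h2
  refine squeeze_zero_norm' ?_ hg
  filter_upwards [eventually_ge_atTop 1] with m hm
  set n := Nat.sqrt m with hn
  have hn1 : 1 ≤ n := Nat.sqrt_pos.2 hm
  have hnm : n ^ 2 ≤ m := Nat.sqrt_le' m
  have hm2 : m ≤ n ^ 2 + 2 * n := by
    have := Nat.lt_succ_sqrt' m
    have h2 : m < (n + 1) ^ 2 := by
      simpa [hn, Nat.succ_eq_add_one] using this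
    nlinarith
  have hmpos : (0 : ℝ) < m := by exact_mod_cast hm
  have hnpos : (0 : ℝ) < n := by exact_mod_cast hn1
  have hn2m : ((n : ℝ) ^ 2) ≤ m := by exact_mod_cast hnm
  have hn2pos : (0 : ℝ) < (n : ℝ) ^ 2 := by positivity
  -- split the sum
  have hsplit : ∑ i ∈ range m, y i
      = (∑ i ∈ range (n ^ 2), y i) + ∑ i ∈ Finset.Ico (n ^ 2) m, y i :=
    (Finset.sum_range_add_sum_Ico y hnm).symm
  have hR : |∑ i ∈ Finset.Ico (n ^ 2) m, y i| ≤ 2 * (n : ℝ) * K := by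
    calc |∑ i ∈ Finset.Ico (n ^ 2) m, y i| ≤ ∑ i ∈ Finset.Ico (n ^ 2) m, |y i| :=
          Finset.abs_sum_le_sum_abs _ _
      _ ≤ ∑ _i ∈ Finset.Ico (n ^ 2) m, K := Finset.sum_le_sum fun i _ => hb i
      _ = ((m - n ^ 2 : ℕ) : ℝ) * K := by
          rw [Finset.sum_const, Nat.card_Ico]; simp [mul_comm]
      _ ≤ 2 * (n : ℝ) * K := by
          have hcast : ((m - n ^ 2 : ℕ) : ℝ) ≤ 2 * (n : ℝ) := by
            have : m - n ^ 2 ≤ 2 * n := by omega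
            exact_mod_cast this
          exact mul_le_mul_of_nonneg_right hcast hK
  have hS : |∑ i ∈ range (n ^ 2), y i| * (m : ℝ)⁻¹
      ≤ |∑ i ∈ range (n ^ 2), y i| * ((n : ℝ) ^ 2)⁻¹ := by
    apply mul_le_mul_of_nonneg_left _ (abs_nonneg _)
    exact inv_anti₀ hn2pos hn2m
  rw [Real.norm_eq_abs, hsplit]
  calc |(m : ℝ)⁻¹ * ((∑ i ∈ range (n ^ 2), y i) + ∑ i ∈ Finset.Ico (n ^ 2) m, y i)|
      ≤ (m : ℝ)⁻¹ * (|∑ i ∈ range (n ^ 2), y i| + |∑ i ∈ Finset.Ico (n ^ 2) m, y i|) := by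
        rw [abs_mul, abs_of_pos (inv_pos.2 hmpos)]
        exact mul_le_mul_of_nonneg_left (abs_add_le _ _) (inv_pos.2 hmpos).le
    _ ≤ |∑ i ∈ range (n ^ 2), y i| * ((n : ℝ) ^ 2)⁻¹ + (m : ℝ)⁻¹ * (2 * (n : ℝ) * K) := by
        rw [mul_add]
        refine add_le_add ?_ (mul_le_mul_of_nonneg_left hR (inv_pos.2 hmpos).le)
        rw [mul_comm]
        exact hS
    _ ≤ |((n : ℝ) ^ 2)⁻¹ * ∑ i ∈ range (n ^ 2), y i| + 3 * K / (n : ℝ) := by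
        refine add_le_add ?_ ?_
        · rw [abs_mul, abs_of_pos (inv_pos.2 hn2pos), mul_comm]
        · have h1 : (m : ℝ)⁻¹ * (2 * (n : ℝ) * K) ≤ ((n:ℝ)^2)⁻¹ * (2 * (n : ℝ) * K) := by
            apply mul_le_mul_of_nonneg_right (inv_anti₀ hn2pos hn2m)
            positivity
          have h2 : ((n:ℝ)^2)⁻¹ * (2 * (n : ℝ) * K) = 2 * K / (n : ℝ) := by
            field_simp
          have h3 : 2 * K / (n : ℝ) ≤ 3 * K / (n : ℝ) := by
            gcongr
            linarith
          linarith

/-- Strong law of large numbers for uniformly bounded independent centered real random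
variables (not necessarily identically distributed). -/
lemma slln_bounded {Ω : Type*} [MeasurableSpace Ω] (μ : Measure Ω) [IsProbabilityMeasure μ]
    (Y : ℕ → Ω → ℝ) (hm : ∀ i, Measurable (Y i))
    (hi : iIndepFun Y μ)
    (K : ℝ) (hK : 0 ≤ K) (hb : ∀ i ω, |Y i ω| ≤ K) (h0 : ∀ i, ∫ ω, Y i ω ∂μ = 0) :
    ∀ᵐ ω ∂μ, Tendsto (fun n : ℕ => ((n : ℝ))⁻¹ * ∑ i ∈ range n, Y i ω) atTop (nhds 0) := by
  -- ℒ² membership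
  have hmem2 : ∀ i, MemLp (Y i) 2 μ := fun i =>
    (memLp_top_of_bound (hm i).aestronglyMeasurable K
      (Filter.Eventually.of_forall fun ω => by
        simpa [Real.norm_eq_abs] using hb i ω)).mono_exponent le_top
  have hint : ∀ i, Integrable (Y i) μ := fun i => (hmem2 i).integrable one_le_two
  -- individual variance bound
  have hvar : ∀ i, variance (Y i) μ ≤ K ^ 2 := by
    intro i
    have h1 : ∀ᵐ ω ∂μ, Y i ω ∈ Set.Icc (-K) K :=
      Filter.Eventually.of_forall fun ω => abs_le.1 (hb i ω)
    have := variance_le_sq_of_bounded h1 (hm i).aemeasurable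
    calc variance (Y i) μ ≤ ((K - -K) / 2) ^ 2 := this
      _ = K ^ 2 := by ring
  -- sums
  set S : ℕ → Ω → ℝ := fun n ω => ∑ i ∈ range n, Y i ω with hS
  have hSfun : ∀ n, S n = ∑ i ∈ range n, Y i := by
    intro n; funext ω; simp [hS, Finset.sum_apply]
  have hSmem : ∀ n, MemLp (S n) 2 μ := fun n => by
    rw [hSfun n]; exact memLp_finset_sum' _ fun i _ => hmem2 i
  have hSm : ∀ n, Measurable (S n) := fun n =>
    Finset.measurable_sum _ fun i _ => hm i
  have hSmean : ∀ n, ∫ ω, S n ω ∂μ = 0 := by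
    intro n
    rw [show (fun ω => S n ω) = fun ω => ∑ i ∈ range n, Y i ω from rfl,
      integral_finset_sum _ fun i _ => hint i]
    simp [h0]
  have hSvar : ∀ n, variance (S n) μ ≤ n * K ^ 2 := by
    intro n
    rw [hSfun n, IndepFun.variance_sum (fun i _ => hmem2 i)
      (fun i _ j _ hij => hi.indepFun hij)]
    calc ∑ i ∈ range n, variance (Y i) μ ≤ ∑ _i ∈ range n, K ^ 2 :=
          Finset.sum_le_sum fun i _ => hvar i
      _ = n * K ^ 2 := by simp [mul_comm]
  have hSsq : ∀ n, ∫ ω, (S n ω) ^ 2 ∂μ ≤ n * K ^ 2 := by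
    intro n
    have hv := variance_eq_sub (hSmem n)
    have h3 : μ[S n] = 0 := hSmean n
    rw [h3] at hv
    have h4 := hSvar n
    rw [hv] at h4
    have h5 : μ[(S n) ^ 2] = ∫ ω, (S n ω) ^ 2 ∂μ := by
      congr 1
    simpa [h5] using h4
  -- the subsequence averages
  set g : ℕ → Ω → ℝ := fun n ω => (((n : ℝ)) ^ 2)⁻¹ * S (n ^ 2) ω with hg
  have hgm : ∀ n, Measurable (g n) := fun n => (hSm (n ^ 2)).const_mul _
  have hgmem : ∀ n, MemLp (g n) 2 μ := fun n => (hSmem (n ^ 2)).const_mul _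
  have hgsq : ∀ n, ∫ ω, (g n ω) ^ 2 ∂μ ≤ K ^ 2 * ((n : ℝ) ^ 2)⁻¹ := by
    intro n
    rcases Nat.eq_zero_or_pos n with rfl | hn
    · simp [hg, hS]
    have hnpos : (0 : ℝ) < n := by exact_mod_cast hn
    have h1 : ∀ ω, (g n ω) ^ 2 = (((n : ℝ) ^ 2)⁻¹) ^ 2 * (S (n ^ 2) ω) ^ 2 := by
      intro ω; rw [hg]; ring
    rw [show (fun ω => (g n ω)^2) = fun ω => (((n : ℝ) ^ 2)⁻¹) ^ 2 * (S (n ^ 2) ω) ^ 2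
        from funext h1, integral_const_mul]
    have h2 := hSsq (n ^ 2)
    have h3 : (((n : ℝ) ^ 2)⁻¹) ^ 2 * ∫ ω, (S (n ^ 2) ω) ^ 2 ∂μ
        ≤ (((n : ℝ) ^ 2)⁻¹) ^ 2 * ((n ^ 2 : ℕ) * K ^ 2) :=
      mul_le_mul_of_nonneg_left h2 (by positivity)
    refine h3.trans (le_of_eq ?_)
    push_cast
    field_simp
  -- summability of second moments ⇒ a.e. convergence of `g`
  have hlint : ∀ n, ∫⁻ ω, ((‖g n ω‖₊ : ℝ≥0∞)) ^ 2 ∂μ ≤ ENNReal.ofReal (K ^ 2 * ((n : ℝ) ^ 2)⁻¹) := by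
    intro n
    have hInt : Integrable (fun ω => (g n ω) ^ 2) μ := (hgmem n).integrable_sq
    have hpos : 0 ≤ᵐ[μ] fun ω => (g n ω) ^ 2 :=
      Filter.Eventually.of_forall fun ω => sq_nonneg _
    have heq : ∫⁻ ω, ((‖g n ω‖₊ : ℝ≥0∞)) ^ 2 ∂μ = ENNReal.ofReal (∫ ω, (g n ω) ^ 2 ∂μ) := by
      rw [ofReal_integral_eq_lintegral_ofReal hInt hpos]
      refine lintegral_congr fun ω => ?_
      rw [← sq_abs, ENNReal.ofReal_pow (abs_nonneg _), ← Real.enorm_eq_ofReal_abs, enorm_eq_nnnorm]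
    rw [heq]
    exact ENNReal.ofReal_le_ofReal (hgsq n)
  have hsummable : Summable (fun n : ℕ => K ^ 2 * ((n : ℝ) ^ 2)⁻¹) := by
    have h1 : Summable (fun n : ℕ => 1 / (n : ℝ) ^ 2) := Real.summable_one_div_nat_pow.2 one_lt_two
    simpa [one_div] using h1.mul_left (K ^ 2)
  have htsum : ∑' n, ∫⁻ ω, ((‖g n ω‖₊ : ℝ≥0∞)) ^ 2 ∂μ ≠ ⊤ := by
    refine ne_top_of_le_ne_top ?_ (ENNReal.tsum_le_tsum hlint)
    rw [← ENNReal.ofReal_tsum_of_nonneg (fun n => by positivity) hsummable]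
    exact ENNReal.ofReal_ne_top
  have haemeas : ∀ n, AEMeasurable (fun ω => ((‖g n ω‖₊ : ℝ≥0∞)) ^ 2) μ := fun n =>
    (((hgm n).nnnorm.coe_nnreal_ennreal).pow_const 2).aemeasurable
  have hae : ∀ᵐ ω ∂μ, ∑' n, ((‖g n ω‖₊ : ℝ≥0∞)) ^ 2 < ⊤ := by
    refine ae_lt_top (Measurable.ennreal_tsum fun n => ((hgm n).nnnorm.coe_nnreal_ennreal).pow_const 2) ?_
    rw [lintegral_tsum haemeas]
    exact htsum
  -- conclude
  filter_upwards [hae] with ω hω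
  have hgconv : Tendsto (fun n => g n ω) atTop (nhds 0) := by
    have h1 : Tendsto (fun n => ((‖g n ω‖₊ : ℝ≥0∞)) ^ 2) atTop (nhds 0) :=
      ENNReal.tendsto_atTop_zero_of_tsum_ne_top hω.ne
    have h2 : Tendsto (fun n => (((‖g n ω‖₊ : ℝ≥0∞)) ^ 2).toReal) atTop (nhds 0) := by
      have h2' := (ENNReal.tendsto_toReal (by simp : (0:ℝ≥0∞) ≠ ⊤)).comp h1
      simpa [Function.comp_def] using h2'
    have h3 : ∀ n, (((‖g n ω‖₊ : ℝ≥0∞)) ^ 2).toReal = (g n ω) ^ 2 := by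
      intro n
      rw [ENNReal.toReal_pow, ENNReal.coe_toReal, coe_nnnorm, Real.norm_eq_abs, sq_abs]
    rw [show (fun n => (((‖g n ω‖₊ : ℝ≥0∞)) ^ 2).toReal) = fun n => (g n ω) ^ 2
      from funext h3] at h2
    -- from squares to the sequence
    have h4 : Tendsto (fun n => |g n ω|) atTop (nhds 0) := by
      have h5 := (Real.continuous_sqrt.tendsto 0).comp h2
      simp only [Function.comp_def, Real.sqrt_sq_eq_abs, Real.sqrt_zero] at h5
      exact h5
    refine (tendsto_zero_iff_abs_tendsto_zero _).2 ?_
    simpa [Function.comp_def] using h4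
  exact avg_tendsto_of_sq K hK (fun i => Y i ω) (fun i => hb i ω) hgconv



section main
open Bornology ProbabilityTheory Filter Finset

/-- full SLLN for random sets in finite dimensions: for a uniformly bounded
independent sequence of random convex bounded sets `Ψ n` in a finite-dimensional Banach
space with expectations `U n` (via the Rådström embedding), the Hausdorff distance between
the averages of `Ψ i (ω)` and of `U i` tends to `0` almost everywhere. -/
theorem stmt14 {X : Type*} [NormedAddCommGroup X] [NormedSpace ℝ X] [FiniteDimensional ℝ X]
    {Ω : Type*} [MeasurableSpace Ω] (μ : Measure Ω) [IsProbabilityMeasure μ]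
    (Ψ : ℕ → Ω → Set X)
    (hval : ∀ n ω, (Ψ n ω).Nonempty ∧ Bornology.IsBounded (Ψ n ω) ∧ Convex ℝ (Ψ n ω))
    (hbdd : ∃ C : ℝ, ∀ n ω, Ψ n ω ⊆ Metric.closedBall (0 : X) C)
    (hmeas : ∀ n, Measurable fun ω => Rad (Ψ n ω))
    (hindep : ProbabilityTheory.iIndepFun
      (fun n ω => Rad (Ψ n ω)) μ)
    (U : ℕ → Set X)
    (hU : ∀ n, (U n).Nonempty ∧ Bornology.IsBounded (U n) ∧ Convex ℝ (U n))
    (hexp : ∀ n (f : X →L[ℝ] ℝ),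
      Integrable (fun ω => suppFn (Ψ n ω) f) μ ∧
      ∫ ω, suppFn (Ψ n ω) f ∂μ = suppFn (U n) f) :
    ∀ᵐ ω ∂μ, Filter.Tendsto
      (fun n : ℕ => rhoH (((n : ℝ))⁻¹ • ∑ i ∈ Finset.range n, Ψ i ω)
                         (((n : ℝ))⁻¹ • ∑ i ∈ Finset.range n, U i))
      Filter.atTop (nhds 0) := by
  classical
  obtain ⟨C, hC⟩ := hbdd
  have hΩ : Nonempty Ω := by
    by_contra h
    rw [not_nonempty_iff] at h
    have h1 := measure_univ (μ := μ)
    rw [Set.univ_eq_empty_iff.2 h, measure_empty] at h1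
    exact zero_ne_one h1
  have hC0 : 0 ≤ C := by
    obtain ⟨x, hx⟩ := (hval 0 (Classical.arbitrary Ω)).1
    have h1 := hC 0 (Classical.arbitrary Ω) hx
    rw [Metric.mem_closedBall, dist_zero_right] at h1
    exact le_trans (norm_nonneg x) h1
  set L : ℝ := 2 * C with hLdef
  have hL0 : 0 ≤ L := by positivity
  have hUsupp : ∀ i (f : X →L[ℝ] ℝ), suppFn (U i) f = ∫ ω, suppFn (Ψ i ω) f ∂μ :=
    fun i f => ((hexp i f).2).symm
  have hPsiBnd : ∀ i ω (f : X →L[ℝ] ℝ), |suppFn (Ψ i ω) f| ≤ ‖f‖ * C :=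
    fun i ω f => abs_suppFn_le (hval i ω).1 (hC i ω) f
  have hPsiLip : ∀ i ω (f g : X →L[ℝ] ℝ), |suppFn (Ψ i ω) f - suppFn (Ψ i ω) g| ≤ ‖f - g‖ * C :=
    fun i ω f g => abs_suppFn_sub_le (hval i ω).1 (hC i ω) f g
  have hUBnd : ∀ i (f : X →L[ℝ] ℝ), |suppFn (U i) f| ≤ ‖f‖ * C := by
    intro i f
    rw [hUsupp i f]
    calc |∫ ω, suppFn (Ψ i ω) f ∂μ| ≤ ∫ ω, |suppFn (Ψ i ω) f| ∂μ := by
          simpa [Real.norm_eq_abs] using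
            norm_integral_le_integral_norm (μ := μ) (fun ω => suppFn (Ψ i ω) f)
      _ ≤ ∫ _ω, ‖f‖ * C ∂μ :=
          integral_mono ((hexp i f).1.abs) (integrable_const _) (fun ω => hPsiBnd i ω f)
      _ = ‖f‖ * C := by simp
  have hULip : ∀ i (f g : X →L[ℝ] ℝ), |suppFn (U i) f - suppFn (U i) g| ≤ ‖f - g‖ * C := by
    intro i f g
    rw [hUsupp i f, hUsupp i g, ← integral_sub (hexp i f).1 (hexp i g).1]
    calc |∫ ω, (suppFn (Ψ i ω) f - suppFn (Ψ i ω) g) ∂μ|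
        ≤ ∫ ω, |suppFn (Ψ i ω) f - suppFn (Ψ i ω) g| ∂μ := by
          simpa [Real.norm_eq_abs] using
            norm_integral_le_integral_norm (μ := μ)
              (fun ω => suppFn (Ψ i ω) f - suppFn (Ψ i ω) g)
      _ ≤ ∫ _ω, ‖f - g‖ * C ∂μ :=
          integral_mono (((hexp i f).1.sub (hexp i g).1).abs) (integrable_const _)
            (fun ω => hPsiLip i ω f g)
      _ = ‖f - g‖ * C := by simp
  set Z : ℕ → (X →L[ℝ] ℝ) → Ω → ℝ := fun i f ω => suppFn (Ψ i ω) f - suppFn (U i) f with hZdef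
  have hZbnd : ∀ i ω (f : X →L[ℝ] ℝ), ‖f‖ = 1 → |Z i f ω| ≤ L := by
    intro i ω f hf
    have h1 := hPsiBnd i ω f
    have h2 := hUBnd i f
    rw [hf, one_mul] at h1 h2
    rw [hZdef]
    have := abs_sub (suppFn (Ψ i ω) f) (suppFn (U i) f)
    calc |suppFn (Ψ i ω) f - suppFn (U i) f| ≤ |suppFn (Ψ i ω) f| + |suppFn (U i) f| :=
          abs_sub _ _
      _ ≤ L := by rw [hLdef]; linarith
  have hZlip : ∀ i ω (f g : X →L[ℝ] ℝ), |Z i f ω - Z i g ω| ≤ ‖f - g‖ * L := by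
    intro i ω f g
    have h1 := hPsiLip i ω f g
    have h2 := hULip i f g
    have heq : Z i f ω - Z i g ω
        = (suppFn (Ψ i ω) f - suppFn (Ψ i ω) g) - (suppFn (U i) f - suppFn (U i) g) := by
      rw [hZdef]; ring
    rw [heq, hLdef]
    calc |(suppFn (Ψ i ω) f - suppFn (Ψ i ω) g) - (suppFn (U i) f - suppFn (U i) g)|
        ≤ |suppFn (Ψ i ω) f - suppFn (Ψ i ω) g| + |suppFn (U i) f - suppFn (U i) g| :=
          abs_sub _ _
      _ ≤ ‖f - g‖ * (2 * C) := by linarith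
  have hZmean : ∀ i (f : X →L[ℝ] ℝ), ∫ ω, Z i f ω ∂μ = 0 := by
    intro i f
    rw [hZdef]
    simp only
    rw [integral_sub (hexp i f).1 (integrable_const _), (hexp i f).2, integral_const]
    simp
  have hslln : ∀ f : X →L[ℝ] ℝ, ‖f‖ = 1 → ∀ᵐ ω ∂μ,
      Tendsto (fun n : ℕ => ((n : ℝ))⁻¹ * ∑ i ∈ range n, Z i f ω) atTop (nhds 0) := by
    intro f hf
    set φ : ℕ → (DualSphere X → ℝ) → ℝ := fun i v => v ⟨f, hf⟩ - suppFn (U i) f with hφdef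
    have hφm : ∀ i, Measurable (φ i) := fun i => (measurable_pi_apply _).sub measurable_const
    have hcomp := hindep.comp φ hφm
    have hmeasZ : ∀ i, Measurable (fun ω => Z i f ω) := by
      intro i
      have heq : (fun ω => Z i f ω) = φ i ∘ (fun ω => Rad (Ψ i ω)) := rfl
      rw [heq]
      exact (hφm i).comp (hmeas i)
    exact slln_bounded μ (fun i => Z i f) hmeasZ hcomp L hL0
      (fun i ω => hZbnd i ω f hf) (fun i => hZmean i f)
  set SS : Set (X →L[ℝ] ℝ) := Metric.sphere 0 1 with hSSdef
  have hScomp : IsCompact SS := isCompact_sphere 0 1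
  have hcov : ∀ k : ℕ, ∃ T : Set (X →L[ℝ] ℝ), T ⊆ SS ∧ T.Finite ∧
      SS ⊆ ⋃ t ∈ T, Metric.ball t (((k : ℝ) + 1)⁻¹) := by
    intro k
    have hrk : (0 : ℝ) < ((k : ℝ) + 1)⁻¹ := by positivity
    obtain ⟨T, hT1, hT2, hT3⟩ := hScomp.elim_finite_subcover_image
      (fun t _ => Metric.isOpen_ball)
      (fun x hx => Set.mem_biUnion hx (Metric.mem_ball_self hrk))
    exact ⟨T, hT1, hT2, hT3⟩
  choose T hT1 hT2 hT3 using hcov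
  have hae : ∀ᵐ ω ∂μ, ∀ k : ℕ, ∀ t ∈ T k,
      Tendsto (fun n : ℕ => ((n : ℝ))⁻¹ * ∑ i ∈ range n, Z i t ω) atTop (nhds 0) := by
    rw [ae_all_iff]
    intro k
    rw [ae_ball_iff (hT2 k).countable]
    intro t ht
    refine hslln t ?_
    have := hT1 k ht
    rwa [hSSdef, mem_sphere_zero_iff_norm] at this
  filter_upwards [hae] with ω hω
  rw [Metric.tendsto_atTop]
  intro ε hε
  obtain ⟨k, hk⟩ := exists_nat_ge (4 * (L + 1) / ε)
  have hLp1 : (0 : ℝ) < L + 1 := by linarith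
  have hLk : L * ((k : ℝ) + 1)⁻¹ ≤ ε / 4 := by
    have h4 : (0 : ℝ) < 4 * (L + 1) / ε := by positivity
    have hkk : 4 * (L + 1) / ε ≤ (k : ℝ) + 1 := le_trans hk (by linarith)
    have hinv : ((k : ℝ) + 1)⁻¹ ≤ (4 * (L + 1) / ε)⁻¹ := inv_anti₀ h4 hkk
    have heq2 : (4 * (L + 1) / ε)⁻¹ = ε / (4 * (L + 1)) := by rw [inv_div]
    calc L * ((k : ℝ) + 1)⁻¹ ≤ (L + 1) * (ε / (4 * (L + 1))) := by
          refine mul_le_mul (by linarith) ?_ (by positivity) (by linarith)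
          rw [← heq2]; exact hinv
      _ = ε / 4 := by field_simp
  have hev : ∀ᶠ n : ℕ in atTop, ∀ t ∈ T k,
      |((n : ℝ))⁻¹ * ∑ i ∈ range n, Z i t ω| < ε / 4 := by
    rw [eventually_all_finite (hT2 k)]
    intro t ht
    have h2 := (NormedAddCommGroup.tendsto_nhds_zero.1 (hω k t ht)) (ε / 4) (by positivity)
    simpa only [Real.norm_eq_abs] using h2
  rcases eventually_atTop.1 (hev.and (eventually_ge_atTop 1)) with ⟨N, hN⟩
  refine ⟨N, fun n hn => ?_⟩
  obtain ⟨hn1, hn2⟩ := hN n hn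
  -- deterministic estimate for fixed n ≥ 1
  have hnpos : (0 : ℝ) < (n : ℝ) := by exact_mod_cast hn2
  have hninv : (0 : ℝ) < ((n : ℝ))⁻¹ := by positivity
  have hsumΨ := sum_set_nonempty_bounded (fun i => Ψ i ω) (fun i => (hval i ω).1)
    (fun i => (hval i ω).2.1) n
  have hsumU := sum_set_nonempty_bounded U (fun i => (hU i).1) (fun i => (hU i).2.1) n
  set A : Set X := ((n : ℝ))⁻¹ • ∑ i ∈ range n, Ψ i ω with hAdef
  set B : Set X := ((n : ℝ))⁻¹ • ∑ i ∈ range n, U i with hBdef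
  have hAne : A.Nonempty := hsumΨ.1.smul_set
  have hBne : B.Nonempty := hsumU.1.smul_set
  have hAbd : IsBounded A := hsumΨ.2.smul₀ _
  have hBbd : IsBounded B := hsumU.2.smul₀ _
  have hAconv : Convex ℝ A :=
    (sum_set_convex (fun i => Ψ i ω) (fun i => (hval i ω).2.2) n).smul _
  have hBconv : Convex ℝ B := (sum_set_convex U (fun i => (hU i).2.2) n).smul _
  have hsuppA : ∀ u : X →L[ℝ] ℝ, suppFn A u
      = ((n : ℝ))⁻¹ * ∑ i ∈ range n, suppFn (Ψ i ω) u := by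
    intro u
    rw [hAdef, suppFn_smul hsumΨ.1 hsumΨ.2 hninv u,
      suppFn_sum (fun i => Ψ i ω) (fun i => (hval i ω).1) (fun i => (hval i ω).2.1) u n]
  have hsuppB : ∀ u : X →L[ℝ] ℝ, suppFn B u
      = ((n : ℝ))⁻¹ * ∑ i ∈ range n, suppFn (U i) u := by
    intro u
    rw [hBdef, suppFn_smul hsumU.1 hsumU.2 hninv u,
      suppFn_sum U (fun i => (hU i).1) (fun i => (hU i).2.1) u n]
  have hdiff : ∀ u : X →L[ℝ] ℝ, suppFn A u - suppFn B u
      = ((n : ℝ))⁻¹ * ∑ i ∈ range n, Z i u ω := by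
    intro u
    rw [hsuppA u, hsuppB u, ← mul_sub, ← Finset.sum_sub_distrib]
  have hmain : ∀ u : X →L[ℝ] ℝ, u ∈ SS → |suppFn A u - suppFn B u| ≤ ε / 2 := by
    intro u hu
    obtain ⟨t, ht, hut⟩ : ∃ t ∈ T k, u ∈ Metric.ball t (((k : ℝ) + 1)⁻¹) := by
      have := hT3 k hu
      simpa using this
    have hd1 : |((n : ℝ))⁻¹ * ∑ i ∈ range n, Z i t ω| < ε / 4 := hn1 t ht
    have hut' : ‖u - t‖ < ((k : ℝ) + 1)⁻¹ := by
      rw [Metric.mem_ball, dist_eq_norm] at hut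
      exact hut
    have hd2 : ‖u - t‖ * L ≤ ε / 4 := by
      calc ‖u - t‖ * L = L * ‖u - t‖ := mul_comm _ _
        _ ≤ L * ((k : ℝ) + 1)⁻¹ := mul_le_mul_of_nonneg_left hut'.le hL0
        _ ≤ ε / 4 := hLk
    have hglip : |(((n : ℝ))⁻¹ * ∑ i ∈ range n, Z i u ω)
        - (((n : ℝ))⁻¹ * ∑ i ∈ range n, Z i t ω)| ≤ ‖u - t‖ * L := by
      rw [← mul_sub, ← Finset.sum_sub_distrib, abs_mul, abs_of_pos hninv]
      have h1 : |∑ i ∈ range n, (Z i u ω - Z i t ω)| ≤ (n : ℝ) * (‖u - t‖ * L) := by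
        calc |∑ i ∈ range n, (Z i u ω - Z i t ω)| ≤ ∑ i ∈ range n, |Z i u ω - Z i t ω| :=
              Finset.abs_sum_le_sum_abs _ _
          _ ≤ ∑ _i ∈ range n, ‖u - t‖ * L := Finset.sum_le_sum fun i _ => hZlip i ω u t
          _ = (n : ℝ) * (‖u - t‖ * L) := by simp [mul_comm]
      calc ((n : ℝ))⁻¹ * |∑ i ∈ range n, (Z i u ω - Z i t ω)|
          ≤ ((n : ℝ))⁻¹ * ((n : ℝ) * (‖u - t‖ * L)) :=
            mul_le_mul_of_nonneg_left h1 hninv.le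
        _ = ‖u - t‖ * L := by field_simp
    rw [hdiff u]
    calc |((n : ℝ))⁻¹ * ∑ i ∈ range n, Z i u ω|
        ≤ |(((n : ℝ))⁻¹ * ∑ i ∈ range n, Z i u ω)
            - (((n : ℝ))⁻¹ * ∑ i ∈ range n, Z i t ω)|
          + |((n : ℝ))⁻¹ * ∑ i ∈ range n, Z i t ω| := by
          have := abs_sub_abs_le_abs_sub (((n : ℝ))⁻¹ * ∑ i ∈ range n, Z i u ω)
            (((n : ℝ))⁻¹ * ∑ i ∈ range n, Z i t ω)
          linarith [abs_nonneg (((n : ℝ))⁻¹ * ∑ i ∈ range n, Z i t ω)]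
      _ ≤ ε / 4 + ε / 4 := add_le_add (hglip.trans hd2) hd1.le
      _ = ε / 2 := by ring
  have hε2 : (0 : ℝ) ≤ ε / 2 := by positivity
  have hrb1 : rhoBar A B ≤ ε / 2 := by
    refine rhoBar_le hAconv hAne hBne hBbd hε2 fun u hu => ?_
    have := hmain u (by rwa [hSSdef, mem_sphere_zero_iff_norm])
    have h2 := abs_le.1 this
    linarith [h2.1]
  have hrb2 : rhoBar B A ≤ ε / 2 := by
    refine rhoBar_le hBconv hBne hAne hAbd hε2 fun u hu => ?_
    have := hmain u (by rwa [hSSdef, mem_sphere_zero_iff_norm])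
    have h2 := abs_le.1 this
    linarith [h2.2]
  have hrh : rhoH A B ≤ ε / 2 := max_le hrb1 hrb2
  rw [Real.dist_eq, sub_zero, abs_of_nonneg rhoH_nonneg]
  calc rhoH A B ≤ ε / 2 := hrh
    _ < ε := by linarith

end main
end

section
/- Let X be a separable Banach space and F: Ω → BC(X) a Bochner integrable multifunction on a probability space with ∫_Ω F dμ = {0}. Then for almost all t ∈ Ω, the set F(t) consists of a single point. -/
open Pointwise MeasureTheory

/-- A simple multifunction: finitely many values, with measurable preimages. -/
def SimpleMF {Ω X : Type*} [MeasurableSpace Ω] (F : Ω → Set X) : Prop :=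
  (Set.range F).Finite ∧ ∀ A : Set X, MeasurableSet (F ⁻¹' {A})

/-- Bochner integrability of a multifunction, decoded: the scalar function
`t ↦ ‖F t‖` has an integrable majorant and `F` is an a.e. (Hausdorff-distance) limit
of simple multifunctions. -/
def BochnerIntegrableMF {Ω X : Type*} [MeasurableSpace Ω] [NormedAddCommGroup X]
    (μ : Measure Ω) (F : Ω → Set X) : Prop :=
  (∃ g : Ω → ℝ, Integrable g μ ∧ ∀ᵐ t ∂μ, setNorm (F t) ≤ g t) ∧
  ∃ Fk : ℕ → Ω → Set X, (∀ k, SimpleMF (Fk k)) ∧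
    ∀ᵐ t ∂μ, Filter.Tendsto (fun k => rhoH (Fk k t) (F t)) Filter.atTop (nhds 0)


/-- If `a ∈ A` and `A` is bounded, then `f a ≤ suppFn A f`. -/
lemma le_suppFn_aux {X : Type*} [NormedAddCommGroup X] [NormedSpace ℝ X]
    {A : Set X} (hb : Bornology.IsBounded A) (f : X →L[ℝ] ℝ) {a : X} (ha : a ∈ A) :
    f a ≤ suppFn A f := by
  have hbdd : BddAbove (Set.range fun a : A => f a) := by
    rw [← Set.image_eq_range]
    exact (f.lipschitz.isBounded_image hb).bddAbove
  exact le_ciSup hbdd ⟨a, ha⟩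

lemma suppFn_singleton_zero_aux {X : Type*} [NormedAddCommGroup X] [NormedSpace ℝ X]
    (f : X →L[ℝ] ℝ) : suppFn ({0} : Set X) f = 0 := by
  simp [suppFn, ciSup_unique]

/-- if a Bochner integrable multifunction `F : Ω → BC(X)` on a separable Banach space
has integral `{0}` (i.e. all its support-functionals integrate to `0`), then for
almost all `t` the set `F t` is a single point. -/
theorem stmt16 {X : Type*} [NormedAddCommGroup X] [NormedSpace ℝ X] [CompleteSpace X]
    [TopologicalSpace.SeparableSpace X] {Ω : Type*} [MeasurableSpace Ω] (μ : Measure Ω) [IsProbabilityMeasure μ]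
    (F : Ω → Set X)
    (hval : ∀ t, (F t).Nonempty ∧ Bornology.IsBounded (F t) ∧ Convex ℝ (F t))
    (hint : BochnerIntegrableMF μ F)
    (hzero : ∀ f : X →L[ℝ] ℝ,
      Integrable (fun t => suppFn (F t) f) μ ∧ ∫ t, suppFn (F t) f ∂μ = suppFn {(0 : X)} f) :
    ∀ᵐ t ∂μ, ∃ x : X, F t = {x} := by
  obtain ⟨u, hu⟩ := TopologicalSpace.exists_dense_seq X
  choose g hg1 hg2 using fun n => exists_dual_vector'' ℝ (u n)
  have key : ∀ f : X →L[ℝ] ℝ, ∀ᵐ t ∂μ, ∀ x ∈ F t, ∀ y ∈ F t, f x = f y := by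
    intro f
    obtain ⟨hI1, hE1⟩ := hzero f
    obtain ⟨hI2, hE2⟩ := hzero (-f)
    have hnn : 0 ≤ fun t => suppFn (F t) f + suppFn (F t) (-f) := by
      intro t
      obtain ⟨a, ha⟩ := (hval t).1
      have h1 := le_suppFn_aux (hval t).2.1 f ha
      have h2 := le_suppFn_aux (hval t).2.1 (-f) ha
      simp only [ContinuousLinearMap.neg_apply] at h2
      simp only [Pi.zero_apply]
      linarith
    have hint' : Integrable (fun t => suppFn (F t) f + suppFn (F t) (-f)) μ := hI1.add hI2
    have hI : ∫ t, (suppFn (F t) f + suppFn (F t) (-f)) ∂μ = 0 := by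
      rw [integral_add hI1 hI2, hE1, hE2, suppFn_singleton_zero_aux, suppFn_singleton_zero_aux]
      ring
    have hae := (integral_eq_zero_iff_of_nonneg hnn hint').mp hI
    filter_upwards [hae] with t ht x hx y hy
    have ht' : suppFn (F t) f + suppFn (F t) (-f) = 0 := ht
    have hx1 := le_suppFn_aux (hval t).2.1 f hx
    have hx2 := le_suppFn_aux (hval t).2.1 (-f) hx
    have hy1 := le_suppFn_aux (hval t).2.1 f hy
    have hy2 := le_suppFn_aux (hval t).2.1 (-f) hy
    simp only [ContinuousLinearMap.neg_apply] at hx2 hy2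
    linarith
  have A : ∀ᵐ t ∂μ, ∀ n, ∀ x ∈ F t, ∀ y ∈ F t, g n x = g n y :=
    ae_all_iff.mpr fun n => key (g n)
  filter_upwards [A] with t ht
  obtain ⟨x, hx⟩ := (hval t).1
  refine ⟨x, Set.eq_singleton_iff_unique_mem.mpr ⟨hx, fun y hy => ?_⟩⟩
  by_contra hne
  set z := y - x with hzdef
  have hz : z ≠ 0 := sub_ne_zero.mpr hne
  have hz3 : 0 < ‖z‖ / 3 := by
    have := norm_pos_iff.mpr hz
    linarith
  obtain ⟨n, hn⟩ := Metric.denseRange_iff.mp hu z (‖z‖ / 3) hz3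
  rw [dist_comm, dist_eq_norm] at hn
  have h0 : g n z = 0 := by
    simp [hzdef, map_sub, ht n y hy x hx]
  have hb1 : g n (u n - z) ≤ ‖u n - z‖ := by
    calc g n (u n - z) ≤ ‖g n (u n - z)‖ := le_abs_self _
    _ ≤ ‖g n‖ * ‖u n - z‖ := (g n).le_opNorm _
    _ ≤ 1 * ‖u n - z‖ := by
        exact mul_le_mul_of_nonneg_right (hg1 n) (norm_nonneg _)
    _ = ‖u n - z‖ := one_mul _
  have hznorm : ‖z‖ ≤ ‖u n‖ + ‖u n - z‖ := by
    have hzz : z = u n - (u n - z) := by abel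
    calc ‖z‖ = ‖u n - (u n - z)‖ := by rw [← hzz]
    _ ≤ ‖u n‖ + ‖u n - z‖ := norm_sub_le _ _
  have hgz : g n z = g n (u n) - g n (u n - z) := by
    rw [← map_sub]
    congr 1
    abel
  have hg2' : g n (u n) = ‖u n‖ := by exact_mod_cast hg2 n
  have : (0 : ℝ) < g n z := by
    rw [hgz, hg2']
    linarith
  linarith [this, h0.ge, h0.le]
end
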